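/- arXiv:1601.01824 — 6 statements merged into one kernel-verified Lean document; each statement's English description precedes it below -/
import Mathlib

section
/- If a c-edge-colored graph G with at least one vertex has no PC closed walk, then G has a G-monochromatic vertex. -/
open SimpleGraph

variable {V : Type*} {c : ℕ}

/-- The list of colors of the edges of a walk, in order. -/
def colorList (G : SimpleGraph V) (col : V → V → Fin c) {u v : V} (w : G.Walk u v) :
    List (Fin c) :=
  w.darts.map fun d => col d.toProd.1 d.toProd.2

/-- A walk is properly colored (as an open walk): consecutive edges have different colors. -/
def IsPCOpen (G : SimpleGraph V) (col : V → V → Fin c) {u v : V} (w : G.Walk u v) : Prop :=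
  (colorList G col w).Chain' (· ≠ ·)

/-- A closed walk is properly colored: consecutive edges have different colors,
including the last versus the first edge. -/
def IsPCClosed (G : SimpleGraph V) (col : V → V → Fin c) {u : V} (w : G.Walk u u) : Prop :=
  (colorList G col w ++ (colorList G col w).take 1).Chain' (· ≠ ·)

/-- `G` (with coloring `col`) has a properly colored cycle. -/
def HasPCCycle (G : SimpleGraph V) (col : V → V → Fin c) : Prop :=
  ∃ (u : V) (w : G.Walk u u), w.IsCycle ∧ IsPCClosed G col w

/-- `G` (with coloring `col`) has a properly colored closed trail. -/
def HasPCClosedTrail (G : SimpleGraph V) (col : V → V → Fin c) : Prop :=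
  ∃ (u : V) (w : G.Walk u u), w.IsCircuit ∧ IsPCClosed G col w

/-- `G` (with coloring `col`) has a properly colored closed walk. -/
def HasPCClosedWalk (G : SimpleGraph V) (col : V → V → Fin c) : Prop :=
  ∃ (u : V) (w : G.Walk u u), 0 < w.length ∧ IsPCClosed G col w

/-- A vertex all of whose incident edges have the same color. -/
def MonoVertex (G : SimpleGraph V) (col : V → V → Fin c) (z : V) : Prop :=
  ∀ v w, G.Adj z v → G.Adj z w → col z v = col z w

/-- An ordering (given by an injective ranking `r`) is of type 1 if every vertex sends
edges of only one color into each connected component of the subgraph induced by the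
later vertices. -/
def Ordering1 (G : SimpleGraph V) (col : V → V → Fin c) (r : V → ℕ) : Prop :=
  ∀ (u v w : V) (hv : G.Adj u v) (hw : G.Adj u w) (hrv : r u < r v) (hrw : r u < r w),
    (G.induce {x | r u < r x}).Reachable ⟨v, hrv⟩ ⟨w, hrw⟩ → col u v = col u w

/-- Type 2: all edges from a vertex to later vertices which are not bridges in the
subgraph induced by the vertex together with the later vertices have the same color. -/
def Ordering2 (G : SimpleGraph V) (col : V → V → Fin c) (r : V → ℕ) : Prop :=
  ∀ (u v w : V) (hv : G.Adj u v) (hw : G.Adj u w) (hrv : r u < r v) (hrw : r u < r w),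
    ¬ (G.induce {x | r u ≤ r x}).IsBridge s(⟨u, le_refl (r u)⟩, ⟨v, hrv.le⟩) →
    ¬ (G.induce {x | r u ≤ r x}).IsBridge s(⟨u, le_refl (r u)⟩, ⟨w, hrw.le⟩) →
    col u v = col u w

/-- Type 3: all edges from a vertex to later vertices have the same color. -/
def Ordering3 (G : SimpleGraph V) (col : V → V → Fin c) (r : V → ℕ) : Prop :=
  ∀ u v w : V, G.Adj u v → G.Adj u w → r u < r v → r u < r w → col u v = col u w

/-- Type 4: all edges to later vertices have the same color and all edges to earlier
vertices have the same color. -/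
def Ordering4 (G : SimpleGraph V) (col : V → V → Fin c) (r : V → ℕ) : Prop :=
  Ordering3 G col r ∧
    ∀ u v w : V, G.Adj u v → G.Adj u w → r v < r u → r w < r u → col u v = col u w

/-- Type 5: type 4, and additionally the color towards earlier vertices differs from the
color towards later vertices. -/
def Ordering5 (G : SimpleGraph V) (col : V → V → Fin c) (r : V → ℕ) : Prop :=
  Ordering4 G col r ∧
    ∀ u v w : V, G.Adj u v → G.Adj u w → r v < r u → r u < r w → col u v ≠ col u w

def PCAcyclic1 (G : SimpleGraph V) (col : V → V → Fin c) : Prop :=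
  ∃ r : V → ℕ, Function.Injective r ∧ Ordering1 G col r

def PCAcyclic2 (G : SimpleGraph V) (col : V → V → Fin c) : Prop :=
  ∃ r : V → ℕ, Function.Injective r ∧ Ordering2 G col r

def PCAcyclic3 (G : SimpleGraph V) (col : V → V → Fin c) : Prop :=
  ∃ r : V → ℕ, Function.Injective r ∧ Ordering3 G col r

def PCAcyclic4 (G : SimpleGraph V) (col : V → V → Fin c) : Prop :=
  ∃ r : V → ℕ, Function.Injective r ∧ Ordering4 G col r

def PCAcyclic5 (G : SimpleGraph V) (col : V → V → Fin c) : Prop :=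
  ∃ r : V → ℕ, Function.Injective r ∧ Ordering5 G col r

/-- The number of `C`-monochromatic vertices of a closed walk `C`: vertices whose two
incident edges on `C` (cyclically) have the same color. -/
def monoCount (G : SimpleGraph V) (col : V → V → Fin c) {u : V} (w : G.Walk u u) : ℕ :=
  ((colorList G col w ++ (colorList G col w).take 1).zip
      (colorList G col w ++ (colorList G col w).take 1).tail).countP
    fun p => decide (p.1 = p.2)

/-- The number of vertices of a closed walk `C` that are not `C`-monochromatic. -/
def nonMonoCount (G : SimpleGraph V) (col : V → V → Fin c) {u : V} (w : G.Walk u u) : ℕ :=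
  ((colorList G col w ++ (colorList G col w).take 1).zip
      (colorList G col w ++ (colorList G col w).take 1).tail).countP
    fun p => decide (p.1 ≠ p.2)

/-- Walk through darts `f i, f (i+1), ..., f (i+k)`. -/
def chainWalk (G : SimpleGraph V) (f : ℕ → G.Dart)
    (hf : ∀ j, (f (j + 1)).fst = (f j).snd) :
    (k : ℕ) → (i : ℕ) → G.Walk (f i).fst (f (i + k)).snd
  | 0, i => SimpleGraph.Walk.cons (f i).adj SimpleGraph.Walk.nil
  | k + 1, i =>
      SimpleGraph.Walk.cons (f i).adj
        ((chainWalk G f hf k (i + 1)).copy (hf i)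
          (by rw [show i + 1 + k = i + (k + 1) by omega]))

lemma colorList_chainWalk (G : SimpleGraph V) (col : V → V → Fin c) (f : ℕ → G.Dart)
    (hf : ∀ j, (f (j + 1)).fst = (f j).snd) :
    ∀ (k i : ℕ), colorList G col (chainWalk G f hf k i) =
      (List.range (k + 1)).map fun j => col (f (i + j)).fst (f (i + j)).snd
  | 0, i => by
      simp [chainWalk, colorList, List.range_succ]
  | k + 1, i => by
      have ih := colorList_chainWalk G col f hf k (i + 1)
      simp only [chainWalk, colorList, SimpleGraph.Walk.darts_cons,
        SimpleGraph.Walk.darts_copy, List.map_cons] at *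
      rw [ih, List.range_succ_eq_map (n := k + 1), List.map_cons, List.map_map]
      congr 1
      · apply List.map_congr_left
        intro a ha
        simp only [Function.comp_apply]
        have h : i + 1 + a = i + (a + 1) := by omega
        rw [h]

/-- If a `c`-edge-colored graph `G` with at least one vertex has no
PC closed walk, then `G` has a `G`-monochromatic vertex. -/
theorem no_pc_closed_walk_mono_vertex {V : Type*} [Fintype V] [Nonempty V] {c : ℕ}
    (G : SimpleGraph V) (col : V → V → Fin c) (hsym : ∀ u v, col u v = col v u)
    (hG : ¬ HasPCClosedWalk G col) :
    ∃ z : V, MonoVertex G col z := by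
  classical
  by_contra hmono
  push_neg at hmono
  simp only [MonoVertex, not_forall] at hmono
  -- every dart can be extended with a dart of a different color
  have step : ∀ d : G.Dart, ∃ d' : G.Dart,
      d'.fst = d.snd ∧ col d'.fst d'.snd ≠ col d.fst d.snd := by
    intro d
    obtain ⟨v, w, hv, hw, hne⟩ := hmono d.snd
    by_cases hcase : col d.snd v = col d.fst d.snd
    · refine ⟨⟨(d.snd, w), hw⟩, rfl, ?_⟩
      show col d.snd w ≠ col d.fst d.snd
      intro h
      exact hne (hcase.trans h.symm)
    · exact ⟨⟨(d.snd, v), hv⟩, rfl, hcase⟩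
  -- if there are no darts, every vertex is monochromatic
  by_cases hD : Nonempty G.Dart
  case neg =>
    obtain ⟨z⟩ := (inferInstance : Nonempty V)
    obtain ⟨v, w, hv, _, _⟩ := hmono z
    exact hD ⟨⟨(z, v), hv⟩⟩
  obtain ⟨d0⟩ := hD
  -- build the infinite PC walk
  set f : ℕ → G.Dart := fun n => Nat.rec d0 (fun _ d => Classical.choose (step d)) n with hfdef
  have hf : ∀ j, (f (j + 1)).fst = (f j).snd := fun j =>
    (Classical.choose_spec (step (f j))).1
  have hstep : ∀ j, col (f (j + 1)).fst (f (j + 1)).snd ≠ col (f j).fst (f j).snd :=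
    fun j => (Classical.choose_spec (step (f j))).2
  -- pigeonhole
  have hfin : Finite G.Dart := Finite.of_injective _ (SimpleGraph.Dart.toProd_injective (G := G))
  obtain ⟨a, b, hab, hfab⟩ := Finite.exists_ne_map_eq_of_infinite f
  obtain ⟨m, n, hmn, hfeq⟩ : ∃ m n : ℕ, m < n ∧ f m = f n := by
    rcases hab.lt_or_gt with h | h
    · exact ⟨a, b, h, hfab⟩
    · exact ⟨b, a, h, hfab.symm⟩
  set k := n - m - 1 with hk
  have hnk : m + 1 + k = n := by omega
  have hfmk : f (m + 1 + k) = f m := by rw [hnk, ← hfeq]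
  apply hG
  refine ⟨(f m).snd,
    (chainWalk G f hf k (m + 1)).copy (hf m) (by rw [hfmk]), ?_, ?_⟩
  · rw [SimpleGraph.Walk.length_copy, ← SimpleGraph.Walk.length_darts]
    have := congrArg List.length (colorList_chainWalk G col f hf k (m + 1))
    simp only [colorList, List.length_map, List.length_range] at this
    omega
  · unfold IsPCClosed
    have hcopy : ∀ (hu : (f (m + 1)).fst = (f m).snd) (hv : (f (m + 1 + k)).snd = (f m).snd),
        colorList G col ((chainWalk G f hf k (m + 1)).copy hu hv) =
        colorList G col (chainWalk G f hf k (m + 1)) := by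
      intro hu hv
      simp [colorList]
    rw [hcopy _ _, colorList_chainWalk G col f hf k (m + 1)]
    set cc : ℕ → Fin c := fun t => col (f t).fst (f t).snd with hcc
    set g : ℕ → Fin c := fun j => if j < k + 1 then cc (m + 1 + j) else cc (m + 1) with hg
    have hL : ((List.range (k + 1)).map fun j => col (f (m + 1 + j)).fst (f (m + 1 + j)).snd) =
        (List.range (k + 1)).map fun j => cc (m + 1 + j) := rfl
    rw [hL]
    have htake : ((List.range (k + 1)).map fun j => cc (m + 1 + j)).take 1 = [cc (m + 1)] := by
      rw [List.range_succ_eq_map]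
      simp
    rw [htake]
    have hmain : ((List.range (k + 1)).map fun j => cc (m + 1 + j)) ++ [cc (m + 1)] =
        (List.range (k + 2)).map g := by
      have h1 : (List.range (k + 2)).map g = (List.range (k + 1)).map g ++ [g (k + 1)] := by
        rw [show k + 2 = (k + 1) + 1 from rfl, List.range_succ, List.map_append]
        simp
      rw [h1]
      congr 1
      · apply List.map_congr_left
        intro j hj
        rw [List.mem_range] at hj
        simp [hg, hj]
        exact fun h => absurd h (by omega)
      · simp [hg]
    unfold List.Chain'
    rw [hmain, List.isChain_map, List.isChain_range_succ]
    intro j hj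
    rcases Nat.lt_or_ge j k with hjk | hjk
    · have h1 : g j = cc (m + 1 + j) := by
        simp only [hg]
        exact if_pos (by omega)
      have h2 : g (j + 1) = cc (m + 1 + j + 1) := by
        simp only [hg]
        rw [if_pos (show j + 1 < k + 1 by omega), show m + 1 + (j + 1) = m + 1 + j + 1 by omega]
      rw [h1, h2]
      exact fun h => hstep (m + 1 + j) h.symm
    · have hjeq : j = k := by omega
      have h1 : g j = cc m := by
        have h1a : g j = cc (m + 1 + j) := by
          simp only [hg]
          exact if_pos (by omega)
        rw [h1a, hjeq]
        exact congrArg (fun d => col d.toProd.1 d.toProd.2) hfmk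
      have h2 : g (j + 1) = cc (m + 1) := by
        simp only [hg]
        exact if_neg (by omega)
      rw [h1, h2]
      exact fun h => hstep m h.symm
end

section
/- A c-edge-colored graph G is PC acyclic of type 3 if and only if G has no PC closed walk. -/
open SimpleGraph

variable {V : Type*} {c : ℕ}

namespace PCAux

lemma darts_getElem_toProd {V : Type*} {G : SimpleGraph V} {u v : V} (w : G.Walk u v)
    (k : ℕ) (hk : k < w.length) :
    (w.darts[k]'(by simpa using hk)).toProd = (w.getVert k, w.getVert (k+1)) := by
  induction w generalizing k with
  | nil => simp at hk
  | cons h p ih =>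
    cases k with
    | zero => simp [Walk.getVert_cons_succ]
    | succ k =>
      simpa [Walk.getVert_cons_succ] using ih k (by simpa using hk)

def mkWalk {V : Type*} {G : SimpleGraph V} (f : ℕ → G.Dart)
    (hf : ∀ k, (f (k+1)).fst = (f k).snd) : (len i : ℕ) → G.Walk (f i).fst (f (i+len)).fst
  | 0, _ => Walk.nil
  | (len+1), i =>
      (Walk.cons (by rw [hf i]; exact (f i).adj) (mkWalk f hf len (i+1))).copy rfl
        (congrArg (fun k => (f k).fst) (by omega))

lemma mkWalk_darts {V : Type*} {G : SimpleGraph V} (f : ℕ → G.Dart)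
    (hf : ∀ k, (f (k+1)).fst = (f k).snd) (len i : ℕ) :
    (mkWalk f hf len i).darts = (List.range len).map (fun k => f (i+k)) := by
  induction len generalizing i with
  | zero => simp [mkWalk]
  | succ len ih =>
    rw [mkWalk, Walk.darts_copy, Walk.darts_cons, ih, List.range_succ_eq_map]
    simp only [List.map_cons, List.map_map]
    congr 1
    · exact (Dart.ext _ _ (by simp [hf i])).symm
    · apply List.map_congr_left
      intro a _
      simp only [Function.comp_apply]
      congr 1
      omega



lemma exists_mono {V : Type*} [Fintype V] [Nonempty V] (G : SimpleGraph V)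
    (col : V → V → Fin c) (hsym : ∀ u v, col u v = col v u)
    (h : ¬ HasPCClosedWalk G col) : ∃ z, MonoVertex G col z := by
  classical
  by_contra hmono
  push_neg at hmono
  simp only [MonoVertex, not_forall] at hmono
  -- step function on darts
  have hstep : ∀ d : G.Dart, ∃ d' : G.Dart, d'.fst = d.snd ∧
      col d'.fst d'.snd ≠ col d.fst d.snd := by
    intro d
    obtain ⟨v, w, hv, hw, hvw⟩ := hmono d.snd
    by_cases hcv : col d.snd v = col d.fst d.snd
    · exact ⟨⟨(d.snd, w), hw⟩, rfl, fun hEq => hvw (hcv.trans hEq.symm)⟩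
    · exact ⟨⟨(d.snd, v), hv⟩, rfl, hcv⟩
  choose next hfst hcol using hstep
  -- starting dart
  obtain ⟨z⟩ := ‹Nonempty V›
  obtain ⟨v0, _, hv0, _, _⟩ := hmono z
  set f : ℕ → G.Dart := fun k => next^[k] ⟨(z, v0), hv0⟩ with hfdef
  have hf1 : ∀ k, (f (k+1)).fst = (f k).snd := by
    intro k
    simp only [hfdef, Function.iterate_succ_apply']
    exact hfst _
  have hfc : ∀ k, col (f (k+1)).fst (f (k+1)).snd ≠ col (f k).fst (f k).snd := by
    intro k
    simp only [hfdef, Function.iterate_succ_apply']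
    exact hcol _
  obtain ⟨i, j, hij, hfeq⟩ : ∃ i j, i < j ∧ f i = f j := by
    obtain ⟨a, b, hab, he⟩ := Finite.exists_ne_map_eq_of_infinite f
    rcases hab.lt_or_gt with h' | h'
    · exact ⟨a, b, h', he⟩
    · exact ⟨b, a, h', he.symm⟩
  set len := j - i with hlen
  have hilen : i + len = j := by omega
  have hlenpos : 0 < len := by omega
  set C : ℕ → Fin c := fun k => col (f k).fst (f k).snd with hC
  have hCij : C (i + len) = C i := by
    rw [hilen]; exact congrArg (fun d => col d.fst d.snd) hfeq.symm
  -- the closed walk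
  have hend : (f (i+len)).fst = (f i).fst := by
    rw [hilen]; exact congrArg (fun d => d.fst) hfeq.symm
  set w : G.Walk (f i).fst (f i).fst := (mkWalk f hf1 len i).copy rfl hend with hw
  have hdarts : w.darts = (List.range len).map (fun k => f (i+k)) := by
    rw [hw, Walk.darts_copy, mkWalk_darts]
  have hLlen : w.length = len := by
    rw [← Walk.length_darts, hdarts]; simp
  have hcl : colorList G col w = (List.range len).map (fun k => C (i+k)) := by
    rw [colorList, hdarts, List.map_map]; rfl
  apply h
  refine ⟨(f i).fst, w, by omega, ?_⟩
  rw [IsPCClosed, hcl]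
  have htake : ((List.range len).map (fun k => C (i+k))).take 1 = [C i] := by
    rw [← List.map_take, List.take_range]
    have : min 1 len = 1 := by omega
    rw [this]
    simp [List.range_succ]
  rw [htake]
  have : (List.range len).map (fun k => C (i+k)) ++ [C i]
      = (List.range (len+1)).map (fun k => C (i+k)) := by
    rw [List.range_succ, List.map_append]
    congr 1
    simp only [List.map_cons, List.map_nil]
    rw [hCij]
  rw [this]
  show List.IsChain _ _
  rw [List.isChain_map]
  rw [show len + 1 = Nat.succ len from rfl, List.isChain_range_succ]
  intro m _
  exact fun hEq => hfc (i + m) hEq.symm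


end PCAux

namespace PCAux

lemma getElem_idx_congr {α : Type*} (l : List α) {i j : ℕ} (h : i = j) (hj : j < l.length) :
    l[i]'(h ▸ hj) = l[j] := by subst h; rfl

lemma colorList_getElem {V : Type*} {G : SimpleGraph V} (col : V → V → Fin c) {u v : V}
    (w : G.Walk u v) (k : ℕ) (hk : k < w.length) :
    (colorList G col w)[k]'(by simpa [colorList] using hk)
      = col (w.getVert k) (w.getVert (k+1)) := by
  simp only [colorList, List.getElem_map]
  have h := darts_getElem_toProd w k hk
  rw [show (w.darts[k]'(by simpa using hk)).toProd.1 = w.getVert k by rw [h],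
    show (w.darts[k]'(by simpa using hk)).toProd.2 = w.getVert (k+1) by rw [h]]

lemma forward_dir {V : Type*} (G : SimpleGraph V) (col : V → V → Fin c)
    (hsym : ∀ u v, col u v = col v u) :
    PCAcyclic3 G col → ¬ HasPCClosedWalk G col := by
  rintro ⟨r, hrinj, hord⟩ ⟨u, w, hlen, hpc⟩
  set n := w.length with hn
  set g : ℕ → V := w.getVert with hg
  have hg0 : g 0 = u := w.getVert_zero
  have hgn : g n = u := w.getVert_length
  have hadj : ∀ k, k < n → G.Adj (g k) (g (k+1)) := fun k hk => w.adj_getVert_succ hk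
  set L := colorList G col w with hL
  have hLlen : L.length = n := by simp [hL, colorList, hn]
  have htklen : (L.take 1).length = 1 := by rw [List.length_take, hLlen]; omega
  have happ : (L ++ L.take 1).length = n + 1 := by rw [List.length_append, hLlen, htklen]
  have hpc2 : (L ++ L.take 1).Chain' (· ≠ ·) := hpc
  have hpc' : ∀ i (h : i < (L ++ L.take 1).length - 1), (L ++ L.take 1).get ⟨i, by omega⟩ ≠
      (L ++ L.take 1).get ⟨i+1, by omega⟩ := fun i h => List.isChain_iff_getElem.mp hpc2 i (by omega)
  have hgetL : ∀ i (hi : i < n), L[i]'(by omega) = col (g i) (g (i+1)) := by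
    intro i hi
    exact colorList_getElem col w i (by omega)
  have hchain1 : ∀ i, i + 1 < n → col (g i) (g (i+1)) ≠ col (g (i+1)) (g (i+2)) := by
    intro i hi
    have h' := hpc' i (by omega)
    simp only [List.get_eq_getElem, Fin.val_mk] at h'
    rwa [List.getElem_append_left (by omega), List.getElem_append_left (by omega),
      hgetL i (by omega), hgetL (i+1) (by omega)] at h'
  have hchainw : col (g (n-1)) (g n) ≠ col (g 0) (g 1) := by
    have key := hpc' (n-1) (by omega)
    have e1 : (L ++ L.take 1).get ⟨n-1, by omega⟩ = col (g (n-1)) (g n) := by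
      simp only [List.get_eq_getElem, Fin.val_mk]
      rw [List.getElem_append_left (by omega), hgetL (n-1) (by omega),
        show n - 1 + 1 = n by omega]
    have e2 : (L ++ L.take 1).get ⟨n-1+1, by omega⟩ = col (g 0) (g 1) := by
      simp only [List.get_eq_getElem, Fin.val_mk]
      rw [List.getElem_append_right (by omega), List.getElem_take,
        getElem_idx_congr L (show n-1+1 - L.length = 0 by omega) (by omega), hgetL 0 (by omega)]
    rw [e1, e2] at key
    exact key
  have hn2 : 2 ≤ n := by
    rcases Nat.lt_or_ge n 2 with h2 | h2
    · have hn1 : n = 1 := by omega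
      have := hadj 0 (by omega)
      rw [hg0, show (0:ℕ)+1 = n by omega, hgn] at this
      exact absurd this (G.loopless.irrefl u)
    · exact h2
  obtain ⟨m, hmmem, hmin⟩ := Finset.exists_min_image (Finset.range n) (fun k => r (g k))
    ⟨0, by simp; omega⟩
  rw [Finset.mem_range] at hmmem
  have hminf : ∀ k, k < n → r (g m) ≤ r (g k) := fun k hk => hmin k (Finset.mem_range.mpr hk)
  have hstrict : ∀ k, k < n → g k ≠ g m → r (g m) < r (g k) := by
    intro k hk hne
    exact lt_of_le_of_ne (hminf k hk) (fun hEq => hne (hrinj hEq.symm))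
  rcases Nat.eq_zero_or_pos m with hm0 | hmpos
  · -- m = 0, minimum is u
    subst hm0
    rw [hg0] at hstrict hminf
    have hadja : G.Adj u (g (n-1)) := by
      have := hadj (n-1) (by omega)
      rw [show n - 1 + 1 = n by omega, hgn] at this
      exact this.symm
    have hadjb : G.Adj u (g 1) := by
      have := hadj 0 (by omega); rwa [hg0] at this
    have ra : r u < r (g (n-1)) := hstrict (n-1) (by omega) hadja.ne'
    have rb : r u < r (g 1) := hstrict 1 (by omega) hadjb.ne'
    have := hord u (g (n-1)) (g 1) hadja hadjb ra rb
    apply hchainw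
    rw [hgn, hg0, hsym (g (n-1)) u]
    exact this
  · -- m ≥ 1
    have hadja : G.Adj (g m) (g (m-1)) := by
      have := hadj (m-1) (by omega)
      rw [show m - 1 + 1 = m by omega] at this
      exact this.symm
    have hadjb : G.Adj (g m) (g (m+1)) := hadj m hmmem
    have ra : r (g m) < r (g (m-1)) := hstrict (m-1) (by omega) hadja.ne'
    have rb : r (g m) < r (g (m+1)) := by
      have hle : r (g m) ≤ r (g (m+1)) := by
        rcases Nat.lt_or_ge (m+1) n with h' | h'
        · exact hminf (m+1) h'
        · have : m + 1 = n := by omega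
          rw [this, hgn, ← hg0]
          exact hminf 0 (by omega)
      exact lt_of_le_of_ne hle (fun hEq => hadjb.ne' (hrinj hEq.symm))
    have := hord (g m) (g (m-1)) (g (m+1)) hadja hadjb ra rb
    apply hchain1 (m-1) (by omega)
    rw [show m - 1 + 1 = m by omega, show m - 1 + 2 = m + 1 by omega,
      hsym (g (m-1)) (g m)]
    exact this

end PCAux

namespace PCAux

lemma colorList_map_induce {V : Type*} {G : SimpleGraph V} (s : Set V)
    (col : V → V → Fin c) {u v : ↥s} (w : (G.induce s).Walk u v) :
    colorList G col (w.map (Embedding.induce s).toHom)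
      = colorList (G.induce s) (fun a b => col a b) w := by
  simp only [colorList, Walk.darts_map, List.map_map]
  rfl

lemma aux_acyclic (n : ℕ) : ∀ {V : Type u} [Fintype V] (G : SimpleGraph V)
    (col : V → V → Fin c), Fintype.card V ≤ n → (∀ u v, col u v = col v u) →
    ¬ HasPCClosedWalk G col → PCAcyclic3 G col := by
  induction n with
  | zero =>
    intro V _ G col hcard _ _
    haveI : IsEmpty V := Fintype.card_eq_zero_iff.mp (Nat.le_zero.mp hcard)
    exact ⟨fun _ => 0, fun a => isEmptyElim a, fun a => isEmptyElim a⟩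
  | succ n ih =>
    intro V _ G col hcard hsym hno
    classical
    by_cases hne : Nonempty V
    swap
    · haveI : IsEmpty V := not_nonempty_iff.mp hne
      exact ⟨fun _ => 0, fun a => isEmptyElim a, fun a => isEmptyElim a⟩
    haveI := hne
    obtain ⟨z, hz⟩ := exists_mono G col hsym hno
    set s : Set V := {x | x ≠ z} with hs
    set col' : ↥s → ↥s → Fin c := fun a b => col a b with hcol'
    have hcard' : Fintype.card ↥s ≤ n := by
      have hlt : Fintype.card ↥s < Fintype.card V :=
        Fintype.card_subtype_lt (x := z) (by simp [hs])
      omega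
    have hno' : ¬ HasPCClosedWalk (G.induce s) col' := by
      rintro ⟨u, w, hlen, hpc⟩
      apply hno
      refine ⟨u, w.map (Embedding.induce s).toHom, ?_, ?_⟩
      · exact lt_of_lt_of_eq hlen (Walk.length_map _ _).symm
      · show (colorList G col _ ++ (colorList G col _).take 1).Chain' (· ≠ ·)
        have e : colorList G col (w.map (Embedding.induce s).toHom) = colorList (G.induce s) col' w :=
          colorList_map_induce s col w
        unfold IsPCClosed at hpc
        rw [← e] at hpc
        exact hpc
    obtain ⟨r', hr', ho'⟩ := ih (G.induce s) col' hcard' (fun a b => hsym a b) hno'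
    refine ⟨fun x => if hx : x = z then 0 else r' ⟨x, hx⟩ + 1, ?_, ?_⟩
    · intro a b hab
      dsimp only at hab
      by_cases ha : a = z <;> by_cases hb : b = z
      · rw [ha, hb]
      · rw [dif_pos ha, dif_neg hb] at hab; omega
      · rw [dif_neg ha, dif_pos hb] at hab; omega
      · rw [dif_neg ha, dif_neg hb] at hab
        have heq : r' ⟨a, ha⟩ = r' ⟨b, hb⟩ := by omega
        exact congrArg Subtype.val (hr' heq)
    · intro u v w huv huw hru hrw
      dsimp only at hru hrw
      by_cases hu : u = z
      · subst hu; exact hz v w huv huw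
      · rw [dif_neg hu] at hru hrw
        have hv : v ≠ z := by
          intro h; rw [dif_pos h] at hru; omega
        have hw : w ≠ z := by
          intro h; rw [dif_pos h] at hrw; omega
        rw [dif_neg hv] at hru
        rw [dif_neg hw] at hrw
        have hadjv : (G.induce s).Adj ⟨u, hu⟩ ⟨v, hv⟩ := huv
        have hadjw : (G.induce s).Adj ⟨u, hu⟩ ⟨w, hw⟩ := huw
        exact ho' ⟨u, hu⟩ ⟨v, hv⟩ ⟨w, hw⟩ hadjv hadjw (by omega) (by omega)

end PCAux

/-- A `c`-edge-colored graph `G` is PC acyclic of type 3 if and only if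
`G` has no PC closed walk. -/
theorem pcAcyclic3_iff_no_pc_closed_walk {V : Type*} [Fintype V] {c : ℕ}
    (G : SimpleGraph V) (col : V → V → Fin c) (hsym : ∀ u v, col u v = col v u) :
    PCAcyclic3 G col ↔ ¬ HasPCClosedWalk G col :=
  ⟨PCAux.forward_dir G col hsym,
    fun h => PCAux.aux_acyclic (Fintype.card V) G col le_rfl hsym h⟩
end

section
/- A c-edge-colored graph G with at least one vertex has no PC closed walk if and only if G has a G-monochromatic vertex z such that G − z has no PC closed walk. -/
open SimpleGraph

variable {V : Type*} {c : ℕ}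

lemma cyclic_chain'_iff {α : Type*} {R : α → α → Prop} {l : List α} :
    (l ++ l.take 1).Chain' R ↔
    ((∀ (i : ℕ) (hi : i + 1 < l.length), R (l[i]'(by omega)) (l[i+1]'hi)) ∧
     (∀ (hl : 0 < l.length), R (l[l.length - 1]'(by omega)) (l[0]'hl))) := by
  constructor
  · intro h
    obtain ⟨h1, h2, h3⟩ := List.isChain_append.1 h
    constructor
    · intro i hi
      have := List.isChain_iff_getElem.1 h1 i (by omega)
      simpa using this
    · intro hl
      have hne : l ≠ [] := List.ne_nil_of_length_pos hl
      have hlast : l.getLast? = some (l[l.length - 1]'(by omega)) := by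
        rw [List.getLast?_eq_getLast_of_ne_nil hne, List.getLast_eq_getElem]
      have hhead : (l.take 1).head? = some (l[0]'hl) := by
        cases l with
        | nil => simp at hl
        | cons a t => simp
      exact h3 _ hlast _ hhead
  · rintro ⟨h1, h2⟩
    cases l with
    | nil => exact List.IsChain.nil
    | cons a t =>
      apply List.isChain_append.2
      refine ⟨List.isChain_iff_getElem.2 fun i hi => ?_, by simp, fun x hx y hy => ?_⟩
      · exact h1 i (by simpa using hi)
      · obtain ⟨hne, hx'⟩ := List.mem_getLast?_eq_getLast hx
        have hy' : y = a := by
          have h5 : (List.take 1 (a :: t)).head? = some a := by simp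
          rw [h5, Option.mem_def] at hy
          exact (Option.some_injective _ hy).symm
        rw [hx', hy', List.getLast_eq_getElem]
        exact h2 (by simp)

def inclHom (G : SimpleGraph V) (s : Set V) : G.induce s →g G where
  toFun := Subtype.val
  map_rel' := fun h => h

lemma length_colorList (G : SimpleGraph V) (col : V → V → Fin c) {u v : V} (w : G.Walk u v) :
    (colorList G col w).length = w.length := by
  simp [colorList]

lemma colorList_map_incl (G : SimpleGraph V) (col : V → V → Fin c) (s : Set V)
    {a b : s} (w : (G.induce s).Walk a b) :
    colorList G col (w.map (inclHom G s))
      = colorList (G.induce s) (fun a b => col a.1 b.1) w := by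
  simp only [colorList, SimpleGraph.Walk.darts_map, List.map_map]
  rfl

lemma exists_induceWalk (G : SimpleGraph V) (col : V → V → Fin c) (s : Set V) :
    ∀ {u v : V} (w : G.Walk u v), (∀ x ∈ w.support, x ∈ s) → ∀ (hu : u ∈ s) (hv : v ∈ s),
    ∃ w' : (G.induce s).Walk ⟨u, hu⟩ ⟨v, hv⟩,
      colorList (G.induce s) (fun a b => col a.1 b.1) w' = colorList G col w ∧
      w'.length = w.length := by
  intro u v w
  induction w with
  | nil => exact fun _ hu hv => ⟨.nil, rfl, rfl⟩
  | @cons a b v' h p ih =>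
    intro hs hu hv
    have hb : b ∈ s := hs b (by simp)
    obtain ⟨w', h1, h2⟩ := ih (fun x hx => hs x (by simp [hx])) hb hv
    exact ⟨.cons (show (G.induce s).Adj ⟨a, hu⟩ ⟨b, hb⟩ from h) w', by simp [colorList] at h1 ⊢; exact h1,
      by simp [h2]⟩

lemma not_pc_of_mono (G : SimpleGraph V) (col : V → V → Fin c)
    (hsym : ∀ u v, col u v = col v u) {u z : V} (w : G.Walk u u)
    (hlen : 0 < w.length) (hzs : z ∈ w.support) (hm : MonoVertex G col z) :
    ¬ IsPCClosed G col w := by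
  intro hpc
  obtain ⟨h1, h2⟩ := cyclic_chain'_iff.1 hpc
  have hdn : 0 < w.darts.length := by rw [w.length_darts]; exact hlen
  have hnL : w.darts ≠ [] := List.ne_nil_of_length_pos hdn
  simp only [colorList, List.length_map, List.getElem_map] at h1 h2
  have hdadj : ∀ (i : ℕ) (h : i + 1 < w.darts.length),
      (w.darts[i]'(by omega)).toProd.2 = (w.darts[i+1]'h).toProd.1 := by
    intro i h
    have := List.isChain_iff_getElem.1 w.isChain_dartAdj_darts i (by omega)
    simpa [SimpleGraph.DartAdj] using this
  have hlastsnd : (w.darts[w.darts.length - 1]'(by omega)).toProd.2 = u := by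
    have : (w.darts.getLast hnL).toProd.2 = u := by simp
    rwa [List.getLast_eq_getElem] at this
  by_cases hzu : z = u
  · subst hzu
    have hfst0 : (w.darts[0]'hdn).toProd.1 = z := by
      have : (w.darts.head hnL).toProd.1 = z := by simp
      rwa [List.head_eq_getElem_zero] at this
    have e2 := h2 hdn
    rw [hfst0, hlastsnd] at e2
    have adjA : G.Adj z (w.darts[w.darts.length - 1]'(by omega)).toProd.1 := by
      have := (w.darts[w.darts.length - 1]'(by omega)).adj
      rw [hlastsnd] at this
      exact this.symm
    have adjC : G.Adj z (w.darts[0]'hdn).toProd.2 := by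
      have := (w.darts[0]'hdn).adj
      rwa [hfst0] at this
    exact e2 (by rw [hsym]; exact hm _ _ adjA adjC)
  · have hz' : z ∈ w.darts.map (fun d => d.toProd.2) := by
      rw [SimpleGraph.Walk.map_snd_darts]
      rcases (by rwa [w.support_eq_cons, List.mem_cons] at hzs : z = u ∨ z ∈ w.support.tail) with
        h | h
      · exact absurd h hzu
      · exact h
    obtain ⟨i, hi, hiz⟩ := List.mem_iff_getElem.1 hz'
    rw [List.length_map] at hi
    rw [List.getElem_map] at hiz
    have hine : i ≠ w.darts.length - 1 := by
      intro h
      subst h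
      exact hzu (hiz.symm.trans hlastsnd)
    have hi1 : i + 1 < w.darts.length := by omega
    have e1 := h1 i hi1
    have hd : (w.darts[i]'(by omega)).toProd.2 = (w.darts[i+1]'hi1).toProd.1 := hdadj i hi1
    rw [hiz] at hd
    rw [hiz] at e1
    rw [← hd] at e1
    have adjA : G.Adj z (w.darts[i]'(by omega)).toProd.1 := by
      have := (w.darts[i]'(by omega)).adj
      rw [hiz] at this
      exact this.symm
    have adjB : G.Adj z (w.darts[i+1]'hi1).toProd.2 := by
      have := (w.darts[i+1]'hi1).adj
      rw [← hd] at this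
      exact this
    exact e1 (by rw [hsym]; exact hm _ _ adjA adjB)

def walkAlong (G : SimpleGraph V) (vtx : ℕ → V) (hadj : ∀ n, G.Adj (vtx n) (vtx (n+1)))
    (m : ℕ) : (k : ℕ) → G.Walk (vtx m) (vtx (m+k))
  | 0 => SimpleGraph.Walk.nil
  | k+1 => (walkAlong G vtx hadj m k).concat (hadj (m+k))

lemma length_walkAlong (G : SimpleGraph V) (vtx : ℕ → V)
    (hadj : ∀ n, G.Adj (vtx n) (vtx (n+1))) (m k : ℕ) :
    (walkAlong G vtx hadj m k).length = k := by
  induction k with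
  | zero => rfl
  | succ k ih => simp [walkAlong, SimpleGraph.Walk.length_concat, ih]

lemma colorList_walkAlong (G : SimpleGraph V) (col : V → V → Fin c) (vtx : ℕ → V)
    (hadj : ∀ n, G.Adj (vtx n) (vtx (n+1))) (m k : ℕ) :
    colorList G col (walkAlong G vtx hadj m k)
      = (List.range k).map (fun i => col (vtx (m+i)) (vtx (m+i+1))) := by
  induction k with
  | zero => rfl
  | succ k ih =>
    rw [List.range_succ, List.map_append]
    simp only [colorList] at ih ⊢
    rw [show walkAlong G vtx hadj m (k+1)
        = (walkAlong G vtx hadj m k).concat (hadj (m+k)) from rfl,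
      SimpleGraph.Walk.darts_concat, List.concat_eq_append, List.map_append, ih]
    rfl

/-- A `c`-edge-colored graph `G` with at least one vertex has no PC closed
walk iff `G` has a `G`-monochromatic vertex `z` such that `G - z` has no PC closed walk. -/
theorem no_pc_closed_walk_iff_exists_peel {V : Type*} [Fintype V] [Nonempty V] {c : ℕ}
    (G : SimpleGraph V) (col : V → V → Fin c) (hsym : ∀ u v, col u v = col v u) :
    ¬ HasPCClosedWalk G col ↔
      ∃ z : V, MonoVertex G col z ∧
        ¬ HasPCClosedWalk (G.induce {x | x ≠ z}) (fun a b => col a.1 b.1) := by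
  constructor
  · intro h
    by_contra hc
    push_neg at hc
    have hnm : ∀ z : V, ¬ MonoVertex G col z := by
      intro z hmz
      obtain ⟨a, w', hl, hpc⟩ := hc z hmz
      refine h ⟨a.val, w'.map (inclHom G _), ?_, ?_⟩
      · exact lt_of_lt_of_eq hl (SimpleGraph.Walk.length_map _ _).symm
      · unfold IsPCClosed
        have e := colorList_map_incl G col {x | x ≠ z} w'
        exact (congrArg (fun l : List (Fin c) => List.Chain' (· ≠ ·) (l ++ List.take 1 l)) e).mpr hpc
    classical
    have hex : ∀ z : V, ∃ p : V × V, G.Adj z p.1 ∧ G.Adj z p.2 ∧ col z p.1 ≠ col z p.2 := by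
      intro z
      have hz := hnm z
      unfold MonoVertex at hz
      push_neg at hz
      obtain ⟨v, w', hv, hw, hne⟩ := hz
      exact ⟨(v, w'), hv, hw, hne⟩
    choose AB hA hB hAB using hex
    set nxt : V → V → V :=
      fun p v => if col v (AB v).1 = col v p then (AB v).2 else (AB v).1 with hnxtdef
    have hnxt : ∀ p v, G.Adj v (nxt p v) ∧ col v (nxt p v) ≠ col v p := by
      intro p v
      simp only [hnxtdef]
      split_ifs with hif
      · exact ⟨hB v, fun hcon => hAB v (hif.trans hcon.symm)⟩
      · exact ⟨hA v, hif⟩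
    obtain ⟨z0⟩ := ‹Nonempty V›
    set pr : ℕ → V × V := fun n =>
      Nat.rec (motive := fun _ => V × V) (z0, (AB z0).1)
        (fun _ q => (q.2, nxt q.1 q.2)) n with hprdef
    set vtx : ℕ → V := fun n => (pr n).1 with hvtxdef
    have hv1 : ∀ n, (pr n).2 = vtx (n+1) := fun n => rfl
    have hstep : ∀ n, vtx (n+1+1) = nxt (vtx n) (vtx (n+1)) := fun n => rfl
    have hadj : ∀ n, G.Adj (vtx n) (vtx (n+1)) := by
      intro n
      cases n with
      | zero => exact hA z0
      | succ n =>
        rw [hstep n]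
        exact (hnxt (vtx n) (vtx (n+1))).1
    have hcol : ∀ n, col (vtx (n+1)) (vtx (n+1+1)) ≠ col (vtx (n+1)) (vtx n) := by
      intro n
      rw [hstep n]
      exact (hnxt (vtx n) (vtx (n+1))).2
    have key : ∀ m j : ℕ, vtx m = vtx (m+j+1) → vtx (m+1) = vtx (m+j+1+1) → False := by
      intro m j e1 e2
      apply h
      refine ⟨vtx m, (walkAlong G vtx hadj m (j+1)).copy rfl e1.symm, ?_, ?_⟩
      · rw [SimpleGraph.Walk.length_copy, length_walkAlong]
        omega
      · unfold IsPCClosed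
        have hcc : colorList G col ((walkAlong G vtx hadj m (j+1)).copy rfl e1.symm)
            = (List.range (j+1)).map (fun i => col (vtx (m+i)) (vtx (m+i+1))) := by
          have h0 : colorList G col ((walkAlong G vtx hadj m (j+1)).copy rfl e1.symm)
              = colorList G col (walkAlong G vtx hadj m (j+1)) := by
            unfold colorList
            rw [SimpleGraph.Walk.darts_copy]
          rw [h0, colorList_walkAlong]
        rw [hcc]
        apply cyclic_chain'_iff.2
        constructor
        · intro i hi
          simp only [List.length_map, List.length_range] at hi
          simp only [List.getElem_map, List.getElem_range]
          intro hcon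
          exact hcol (m+i) (hcon.symm.trans (hsym _ _))
        · intro hl
          simp only [List.length_map, List.length_range, Nat.add_sub_cancel,
            List.getElem_map, List.getElem_range]
          intro hcon
          apply hcol (m+j)
          calc col (vtx (m+j+1)) (vtx (m+j+1+1))
              = col (vtx m) (vtx (m+1)) := by rw [← e1, ← e2]
            _ = col (vtx (m+j)) (vtx (m+j+1)) := hcon.symm
            _ = col (vtx (m+j+1)) (vtx (m+j)) := hsym _ _
    obtain ⟨m0, n0, hne0, heq0⟩ :=
      Finite.exists_ne_map_eq_of_infinite (fun n : ℕ => (vtx n, vtx (n+1)))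
    rcases Nat.lt_or_ge m0 n0 with hlt | hge
    · have hn0 : n0 = m0 + (n0 - m0 - 1) + 1 := by omega
      rw [hn0] at heq0
      exact key m0 _ (congrArg Prod.fst heq0) (congrArg Prod.snd heq0)
    · have hlt' : n0 < m0 := by omega
      have hm0 : m0 = n0 + (m0 - n0 - 1) + 1 := by omega
      rw [hm0] at heq0
      exact key n0 _ (congrArg Prod.fst heq0).symm (congrArg Prod.snd heq0).symm
  · rintro ⟨z, hmz, hz⟩ ⟨u, w, hl, hpc⟩
    by_cases hzs : z ∈ w.support
    · exact not_pc_of_mono G col hsym w hl hzs hmz hpc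
    · have hus : u ∈ {x : V | x ≠ z} := fun he => hzs (he ▸ w.start_mem_support)
      obtain ⟨w', hcl, hlen'⟩ := exists_induceWalk G col {x | x ≠ z} w
        (fun x hx hxz => hzs (hxz ▸ hx)) hus hus
      refine hz ⟨⟨u, hus⟩, w', ?_, ?_⟩
      · rw [hlen']; exact hl
      · unfold IsPCClosed
        rw [hcl]
        exact hpc
end

section
/- A 2-edge-colored graph G is PC acyclic of type 5 if and only if G is bipartite and has no PC cycle. -/
open SimpleGraph

variable {V : Type*} {c : ℕ}

section PCAux

open SimpleGraph.Walk

variable {V : Type*} {G : SimpleGraph V} {col : V → V → Fin 2}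

private lemma fin2_eq_of_ne_of_ne : ∀ a b c : Fin 2, a ≠ c → b ≠ c → a = b := by decide

private lemma fin2_ne_one_sub : ∀ a : Fin 2, a ≠ 1 - a := by decide

private lemma fin2_eq_or_eq : ∀ a b c : Fin 2, a ≠ b → c = a ∨ c = b := by decide

lemma colorList_cons {u v w : V} (h : G.Adj u v) (p : G.Walk v w) :
    colorList G col (SimpleGraph.Walk.cons h p) = col u v :: colorList G col p := by
  simp [colorList]

lemma colorList_length {u v : V} (w : G.Walk u v) :
    (colorList G col w).length = w.length := by
  simp [colorList]

lemma colorList_reverse (hsym : ∀ u v, col u v = col v u) {u v : V} (w : G.Walk u v) :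
    colorList G col w.reverse = (colorList G col w).reverse := by
  simp only [colorList, SimpleGraph.Walk.darts_reverse, List.map_reverse, List.map_map]
  congr 1
  apply List.map_congr_left
  intro d _
  exact (hsym _ _).symm

lemma walk_fwd (f : V → Fin 2) (r : V → ℕ)
    (key : ∀ u v, G.Adj u v → (col u v = f u ↔ r u < r v))
    (hf : ∀ u v, G.Adj u v → f u ≠ f v) :
    ∀ {a b : V} (w : G.Walk a b), (colorList G col w).Chain' (· ≠ ·) →
      (colorList G col w).head? = some (f a) → r a < r b := by
  intro a b w
  induction w with
  | nil => intro _ h; simp [colorList] at h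
  | @cons a x b h p ih =>
    intro hch hhd
    rw [colorList_cons] at hch hhd
    simp only [List.head?_cons, Option.some.injEq] at hhd
    have hax : r a < r x := (key a x h).1 hhd
    cases p with
    | nil => exact hax
    | @cons x y b h' q =>
      refine hax.trans (ih hch.tail ?_)
      rw [colorList_cons] at hch ⊢
      simp only [List.head?_cons, Option.some.injEq]
      have h1 : col a x ≠ col x y := (List.isChain_cons_cons.1 hch).1
      have h2 : col x y ≠ f a := fun e => h1 (by rw [hhd, e])
      exact fin2_eq_of_ne_of_ne _ _ _ h2 (hf x a h.symm)

lemma dw_chain (f : V → Fin 2) (hf : ∀ u v, G.Adj u v → f u ≠ f v) :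
    ∀ {a b : V} (w : G.Walk a b),
      (∀ d ∈ w.darts, col d.toProd.1 d.toProd.2 = f d.toProd.1) →
      (colorList G col w).Chain' (· ≠ ·) := by
  intro a b w
  induction w with
  | nil => intro _; simp [colorList, List.Chain']
  | @cons a x b h p ih =>
    intro hd
    rw [colorList_cons]
    have hp : ∀ d ∈ p.darts, col d.toProd.1 d.toProd.2 = f d.toProd.1 := fun d hdm =>
      hd d (by rw [SimpleGraph.Walk.darts_cons]; exact List.mem_cons_of_mem _ hdm)
    refine List.isChain_cons.2 ⟨?_, ih hp⟩
    intro y hy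
    cases p with
    | nil => simp [colorList] at hy
    | @cons x z b h' q =>
      rw [colorList_cons] at hy
      simp only [List.head?_cons, Option.mem_def, Option.some.injEq] at hy
      subst hy
      have h1 : col a x = f a := hd ⟨(a, x), h⟩ (by simp [SimpleGraph.Walk.darts_cons])
      have h2 : col x z = f x := hp ⟨(x, z), h'⟩ (by simp [SimpleGraph.Walk.darts_cons])
      rw [h1, h2]
      exact hf a x h

lemma dw_head (f : V → Fin 2) :
    ∀ {a b : V} (w : G.Walk a b),
      (∀ d ∈ w.darts, col d.toProd.1 d.toProd.2 = f d.toProd.1) →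
      ∀ c ∈ (colorList G col w).head?, c = f a := by
  intro a b w hd c hc
  cases w with
  | nil => simp [colorList] at hc
  | @cons a x b h p =>
    rw [colorList_cons] at hc
    simp only [List.head?_cons, Option.mem_def, Option.some.injEq] at hc
    subst hc
    exact hd ⟨(a, x), h⟩ (by simp [SimpleGraph.Walk.darts_cons])

lemma dw_last (f : V → Fin 2) (hf : ∀ u v, G.Adj u v → f u ≠ f v) :
    ∀ {a b : V} (w : G.Walk a b),
      (∀ d ∈ w.darts, col d.toProd.1 d.toProd.2 = f d.toProd.1) →
      ∀ c ∈ (colorList G col w).getLast?, c ≠ f b := by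
  intro a b w
  induction w with
  | nil => intro _ c hc; simp [colorList] at hc
  | @cons a x b h p ih =>
    intro hd c hc
    have hp : ∀ d ∈ p.darts, col d.toProd.1 d.toProd.2 = f d.toProd.1 := fun d hdm =>
      hd d (by rw [SimpleGraph.Walk.darts_cons]; exact List.mem_cons_of_mem _ hdm)
    cases p with
    | nil =>
      rw [colorList_cons] at hc
      simp only [colorList, SimpleGraph.Walk.darts_nil, List.map_nil, List.getLast?_singleton,
        Option.mem_def, Option.some.injEq] at hc
      subst hc
      have h1 : col a x = f a := hd ⟨(a, x), h⟩ (by simp [SimpleGraph.Walk.darts_cons])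
      rw [h1]
      exact hf a x h
    | @cons x z b h' q =>
      apply ih hp c
      rw [colorList_cons, colorList_cons, List.getLast?_cons_cons,
        ← colorList_cons (col := col) h' q] at hc
      exact hc
lemma dw_pcclosed (f : V → Fin 2) (hf : ∀ u v, G.Adj u v → f u ≠ f v) {u : V}
    (w : G.Walk u u)
    (hd : ∀ d ∈ w.darts, col d.toProd.1 d.toProd.2 = f d.toProd.1) :
    IsPCClosed G col w := by
  have hch := dw_chain f hf w hd
  refine List.isChain_append.2 ⟨hch, hch.take 1, ?_⟩
  intro x hx y hy
  have htake : ((colorList G col w).take 1).head? = (colorList G col w).head? := by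
    cases colorList G col w <;> simp
  rw [htake] at hy
  have hyf : y = f u := dw_head f w hd y hy
  rw [hyf]
  exact dw_last f hf w hd x hx

lemma closed_support_nodup {u : V} (q : G.Walk u u) (h : q.support.Nodup) :
    q.length = 0 := by
  cases q with
  | nil => rfl
  | cons h' q' =>
    exfalso
    rw [SimpleGraph.Walk.support_cons, List.nodup_cons] at h
    exact h.1 q'.end_mem_support

lemma path_len_one {x u : V} (hne : u ≠ x) (p : G.Walk x u) (hnd : p.support.Nodup)
    (he : s(u, x) ∈ p.edges) : p.length = 1 := by
  cases p with
  | nil => simp at he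
  | @cons x z u h q =>
    rw [SimpleGraph.Walk.edges_cons, List.mem_cons] at he
    rw [SimpleGraph.Walk.support_cons, List.nodup_cons] at hnd
    rcases he with he | he
    · have huz : u = z := by
        rw [Sym2.eq_iff] at he
        rcases he with ⟨h1, h2⟩ | ⟨h1, h2⟩
        · exact absurd h1 hne
        · exact h1
      subst huz
      have h0 : q.length = 0 := closed_support_nodup q hnd.2
      rw [SimpleGraph.Walk.length_cons, h0]
    · exact absurd (SimpleGraph.Walk.snd_mem_support_of_mem_edges q he) hnd.1

lemma shorten [DecidableEq V] {y u : V} (q2 : G.Walk y u) (hy3 : y ∈ q2.support.tail) :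
    ∃ cyc : G.Walk y y, 0 < cyc.length ∧ cyc.length ≤ q2.length ∧
      ∀ d ∈ cyc.darts, d ∈ q2.darts := by
  cases q2 with
  | nil => simp at hy3
  | @cons y z u h2 q3 =>
    rw [SimpleGraph.Walk.support_cons, List.tail_cons] at hy3
    refine ⟨SimpleGraph.Walk.cons h2 (q3.takeUntil y hy3), by simp, ?_, ?_⟩
    · rw [SimpleGraph.Walk.length_cons, SimpleGraph.Walk.length_cons]
      exact Nat.succ_le_succ (q3.length_takeUntil_le hy3)
    · intro d hd
      rw [SimpleGraph.Walk.darts_cons, List.mem_cons] at hd ⊢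
      rcases hd with rfl | hd
      · exact Or.inl rfl
      · exact Or.inr (q3.darts_takeUntil_subset hy3 hd)

lemma hasPCCycle_of_dwalk [DecidableEq V] (f : V → Fin 2) (hf : ∀ u v, G.Adj u v → f u ≠ f v)
    (hsym : ∀ u v, col u v = col v u) :
    ∀ n : ℕ, ∀ (u : V) (w : G.Walk u u), w.length ≤ n → 0 < w.length →
      (∀ d ∈ w.darts, col d.toProd.1 d.toProd.2 = f d.toProd.1) →
      HasPCCycle G col := by
  intro n
  induction n with
  | zero => intro u w hle h0 _; omega
  | succ n ih =>
    intro u w hle h0 hdw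
    cases w with
    | nil => simp at h0
    | @cons u x u' h p =>
      have hpd : ∀ d ∈ p.darts, col d.toProd.1 d.toProd.2 = f d.toProd.1 := fun d hdm =>
        hdw d (by rw [SimpleGraph.Walk.darts_cons]; exact List.mem_cons_of_mem _ hdm)
      by_cases hnd : p.support.Nodup
      · have hpux : s(u, x) ∉ p.edges := by
          intro he
          have hp1 : p.length = 1 := path_len_one h.ne p hnd he
          cases p with
          | nil => simp at hp1
          | @cons x z u h' q =>
            cases q with
            | nil =>
              have h1 : col u x = f u := hdw ⟨(u, x), h⟩ (by simp)
              have h2 : col x u = f x := hdw ⟨(x, u), h'⟩ (by simp)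
              exact hf u x h (by rw [← h1, hsym u x, h2])
            | cons _ _ => simp [SimpleGraph.Walk.length_cons] at hp1
        have hcyc : (SimpleGraph.Walk.cons h p).IsCycle :=
          (SimpleGraph.Walk.cons_isCycle_iff p h).2 ⟨(SimpleGraph.Walk.isPath_def p).2 hnd, hpux⟩
        exact ⟨u, _, hcyc, dw_pcclosed f hf _ hdw⟩
      · obtain ⟨y, hy2⟩ : ∃ y, 2 ≤ p.support.count y := by
          by_contra hcon
          push_neg at hcon
          exact hnd (List.nodup_iff_count_le_one.2 fun y => by have := hcon y; omega)
        have hymem : y ∈ p.support := by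
          rw [← List.count_pos_iff]; omega
        have hcnt : p.support.count y
            = (p.takeUntil y hymem).support.count y
              + (p.dropUntil y hymem).support.tail.count y := by
          conv_lhs => rw [← p.take_spec hymem]
          rw [SimpleGraph.Walk.support_append, List.count_append]
        have hc1 : (p.takeUntil y hymem).support.count y = 1 :=
          p.count_support_takeUntil_eq_one hymem
        have hy3 : y ∈ (p.dropUntil y hymem).support.tail := by
          rw [← List.count_pos_iff]; omega
        obtain ⟨cyc, hcpos, hclen, hcd⟩ := shorten (p.dropUntil y hymem) hy3
        have hlen2 : (p.dropUntil y hymem).length ≤ p.length := by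
          have := congrArg SimpleGraph.Walk.length (p.take_spec hymem)
          rw [SimpleGraph.Walk.length_append] at this
          omega
        refine ih y cyc ?_ hcpos ?_
        · rw [SimpleGraph.Walk.length_cons] at hle
          omega
        · intro d hd
          exact hpd d (p.darts_dropUntil_subset hymem (hcd d hd))

end PCAux
/-- A 2-edge-colored graph `G` is PC acyclic of type 5 if and only if
`G` is bipartite and has no PC cycle. -/
theorem pcAcyclic5_iff_bipartite_no_pc_cycle {V : Type*} [Fintype V]
    (G : SimpleGraph V) (col : V → V → Fin 2) (hsym : ∀ u v, col u v = col v u) :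
    PCAcyclic5 G col ↔ G.Colorable 2 ∧ ¬ HasPCCycle G col := by
  classical
  constructor
  · rintro ⟨r, hinj, ⟨⟨h3, h4⟩, h5⟩⟩
    set f : V → Fin 2 := fun u =>
      if h : ∃ v, G.Adj u v ∧ r u < r v then col u h.choose
      else if h2 : ∃ v, G.Adj u v ∧ r v < r u then 1 - col u h2.choose else 0 with hfdef
    have hkey1 : ∀ u v, G.Adj u v → r u < r v → col u v = f u := by
      intro u v hadj hlt
      have hex : ∃ z, G.Adj u z ∧ r u < r z := ⟨v, hadj, hlt⟩
      have hspec := hex.choose_spec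
      rw [hfdef]
      simp only [dif_pos hex]
      exact h3 u v hex.choose hadj hspec.1 hlt hspec.2
    have hkey2 : ∀ u v, G.Adj u v → r v < r u → col u v ≠ f u := by
      intro u v hadj hlt
      rw [hfdef]
      by_cases hex : ∃ z, G.Adj u z ∧ r u < r z
      · simp only [dif_pos hex]
        exact h5 u v hex.choose hadj hex.choose_spec.1 hlt hex.choose_spec.2
      · have hex2 : ∃ z, G.Adj u z ∧ r z < r u := ⟨v, hadj, hlt⟩
        simp only [dif_neg hex, dif_pos hex2]
        rw [h4 u v hex2.choose hadj hex2.choose_spec.1 hlt hex2.choose_spec.2]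
        exact fin2_ne_one_sub _
    have key : ∀ u v, G.Adj u v → (col u v = f u ↔ r u < r v) := by
      intro u v hadj
      have hne : r u ≠ r v := fun e => hadj.ne (hinj e)
      rcases hne.lt_or_gt with hlt | hlt
      · exact ⟨fun _ => hlt, fun _ => hkey1 u v hadj hlt⟩
      · exact ⟨fun hc => absurd hc (hkey2 u v hadj hlt), fun hc => absurd hc (by omega)⟩
    have hf : ∀ u v, G.Adj u v → f u ≠ f v := by
      intro u v hadj
      have hne : r u ≠ r v := fun e => hadj.ne (hinj e)
      rcases hne.lt_or_gt with hlt | hlt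
      · intro heq
        apply hkey2 v u hadj.symm hlt
        rw [hsym v u, hkey1 u v hadj hlt, heq]
      · intro heq
        apply hkey2 u v hadj hlt
        rw [hsym u v, hkey1 v u hadj.symm hlt, heq]
    constructor
    · exact ⟨SimpleGraph.Coloring.mk f fun {u v} h => hf u v h⟩
    · rintro ⟨u, w, hcyc, hpc⟩
      have hlen := hcyc.three_le_length
      have hlne : colorList G col w ≠ [] := by
        intro e
        have hl : (colorList G col w).length = w.length := colorList_length w
        rw [e] at hl
        simp at hl
        omega
      obtain ⟨hchain, -, hcross⟩ := List.isChain_append.1 hpc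
      have hhead : (colorList G col w).head? = some ((colorList G col w).head hlne) :=
        List.head?_eq_head hlne
      have hlast : (colorList G col w).getLast? =
          some ((colorList G col w).getLast hlne) := List.getLast?_eq_getLast hlne
      have htake : ((colorList G col w).take 1).head? = (colorList G col w).head? := by
        cases colorList G col w <;> simp
      have hne12 : (colorList G col w).getLast hlne ≠ (colorList G col w).head hlne :=
        hcross _ hlast _ (by rw [htake]; exact hhead)
      rcases fin2_eq_or_eq _ _ (f u) hne12 with hfu | hfu
      · have hrev : colorList G col w.reverse = (colorList G col w).reverse :=
          colorList_reverse hsym w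
        have hch' : (colorList G col w.reverse).Chain' (· ≠ ·) := by
          rw [hrev]
          exact List.isChain_reverse.2 (hchain.imp fun _ _ h => Ne.symm h)
        have hhd' : (colorList G col w.reverse).head? = some (f u) := by
          rw [hrev, List.head?_reverse, hlast, hfu]
        exact absurd (walk_fwd f r key hf w.reverse hch' hhd') (lt_irrefl _)
      · have hhd : (colorList G col w).head? = some (f u) := by rw [hhead, hfu]
        exact absurd (walk_fwd f r key hf w hchain hhd) (lt_irrefl _)
  · rintro ⟨hcol, hnc⟩
    obtain ⟨C⟩ := hcol
    set f : V → Fin 2 := fun v => C v with hfdef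
    have hfp : ∀ u v, G.Adj u v → f u ≠ f v := fun u v h => C.valid h
    set D : V → V → Prop := fun u v => G.Adj u v ∧ col u v = f u with hD
    have hnt : ∀ a, ¬ Relation.TransGen D a a := by
      intro a hta
      have hwalk : ∀ {x y : V}, Relation.TransGen D x y →
          ∃ w : G.Walk x y, 0 < w.length ∧
            ∀ d ∈ w.darts, col d.toProd.1 d.toProd.2 = f d.toProd.1 := by
        intro x y ht
        induction ht with
        | single hxy =>
          refine ⟨SimpleGraph.Walk.cons hxy.1 SimpleGraph.Walk.nil, by simp, ?_⟩
          intro d hd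
          simp only [SimpleGraph.Walk.darts_cons, SimpleGraph.Walk.darts_nil,
            List.mem_singleton] at hd
          subst hd
          exact hxy.2
        | @tail b c hxb hbc ihw =>
          obtain ⟨w1, h1, hdw⟩ := ihw
          refine ⟨w1.append (SimpleGraph.Walk.cons hbc.1 SimpleGraph.Walk.nil), ?_, ?_⟩
          · rw [SimpleGraph.Walk.length_append]; omega
          · intro d hd
            rw [SimpleGraph.Walk.darts_append, List.mem_append] at hd
            rcases hd with hd | hd
            · exact hdw d hd
            · simp only [SimpleGraph.Walk.darts_cons, SimpleGraph.Walk.darts_nil,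
                List.mem_singleton] at hd
              subst hd
              exact hbc.2
      obtain ⟨w, h0, hdw⟩ := hwalk hta
      exact hnc (hasPCCycle_of_dwalk f hfp hsym w.length a w le_rfl h0 hdw)
    haveI hpo : IsPartialOrder V (Relation.ReflTransGen D) :=
      { refl := fun a => Relation.ReflTransGen.refl
        trans := fun a b c hab hbc => hab.trans hbc
        antisymm := fun a b hab hba => by
          by_contra hne
          rcases Relation.reflTransGen_iff_eq_or_transGen.1 hab with heq | htab
          · exact hne heq.symm
          · exact hnt a (Relation.TransGen.trans_left htab hba) }
    obtain ⟨t, htlin, hsub⟩ := extend_partialOrder (Relation.ReflTransGen D)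
    haveI := htlin
    set r : V → ℕ := fun u => (Finset.univ.filter fun z => t z u ∧ z ≠ u).card with hrdef
    have hmono : ∀ u v, t u v → u ≠ v → r u < r v := by
      intro u v htuv hne
      apply Finset.card_lt_card
      constructor
      · intro z hz
        simp only [Finset.mem_filter, Finset.mem_univ, true_and] at hz ⊢
        refine ⟨IsTrans.trans _ _ _ hz.1 htuv, ?_⟩
        rintro rfl
        exact hne (Std.Antisymm.antisymm _ _ htuv hz.1)
      · intro hsup
        have hu : u ∈ Finset.univ.filter fun z => t z u ∧ z ≠ u := by
          apply hsup
          simp only [Finset.mem_filter, Finset.mem_univ, true_and]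
          exact ⟨htuv, hne⟩
        simp at hu
    have hinj : Function.Injective r := by
      intro u v he
      by_contra hne
      rcases Std.Total.total (r := t) u v with h | h
      · exact absurd he (Nat.ne_of_lt (hmono u v h hne))
      · exact absurd he.symm (Nat.ne_of_lt (hmono v u h (Ne.symm hne)))
    have hDlt : ∀ a b, D a b → r a < r b := fun a b hd =>
      hmono a b (hsub a b (Relation.ReflTransGen.single hd)) hd.1.ne
    have key : ∀ u v, G.Adj u v → (col u v = f u ↔ r u < r v) := by
      intro u v hadj
      constructor
      · intro hc; exact hDlt u v ⟨hadj, hc⟩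
      · intro hlt
        by_contra hcne
        have hc2 : col u v = f v := fin2_eq_of_ne_of_ne _ _ _ hcne (hfp v u hadj.symm)
        have : r v < r u := hDlt v u ⟨hadj.symm, by rw [hsym v u]; exact hc2⟩
        omega
    refine ⟨r, hinj, ⟨⟨?_, ?_⟩, ?_⟩⟩
    · intro u v w hv hw hrv hrw
      rw [(key u v hv).2 hrv, (key u w hw).2 hrw]
    · intro u v w hv hw hrv hrw
      have h1 : col u v ≠ f u := fun e => by have := (key u v hv).1 e; omega
      have h2 : col u w ≠ f u := fun e => by have := (key u w hw).1 e; omega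
      exact fin2_eq_of_ne_of_ne _ _ _ h1 h2
    · intro u v w hv hw hrv hrw
      have h1 : col u v ≠ f u := fun e => by have := (key u v hv).1 e; omega
      rw [show col u w = f u from (key u w hw).2 hrw]
      exact h1
end

section
/- Let G be a c-edge-colored graph which is PC acyclic of type 4, and let x, y be distinct vertices of G. Then the minimum size of a set S ⊆ V(G) \ {x,y} such that G − S has no PC path between x and y equals the maximum number of internally vertex-disjoint PC paths between x and y in G. -/
open SimpleGraph

variable {V : Type*} {c : ℕ}

set_option linter.unusedSectionVars false
namespace List
section ChainShim
variable {α : Type*} {R : α → α → Prop}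
@[simp] theorem chain'_nil_shim : List.Chain' R [] := IsChain.nil
@[simp] theorem chain'_singleton_shim (a : α) : List.Chain' R [a] := IsChain.singleton a
@[simp] theorem chain'_cons {a b : α} {l : List α} :
    Chain' R (a :: b :: l) ↔ R a b ∧ Chain' R (b :: l) := isChain_cons_cons
theorem chain'_iff_pairwise [IsTrans α R] {l : List α} : Chain' R l ↔ Pairwise R l := by
  haveI : Trans R R R := ⟨fun h1 h2 => _root_.trans h1 h2⟩
  exact isChain_iff_pairwise
theorem chain'_reverse {l : List α} : Chain' R l.reverse ↔ Chain' (fun a b => R b a) l :=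
  isChain_reverse
end ChainShim
end List
namespace PCMHelp

variable {V : Type*}

def rel (E : Finset (V × V)) : V → V → Prop := fun a b => (a, b) ∈ E

/-- `p` is a walk (chain) starting in `A` and ending in `B`. -/
def ABWalk (R : V → V → Prop) (A B : Set V) (p : List V) : Prop :=
  p.Chain' R ∧ (∃ a ∈ A, p.head? = some a) ∧ ∃ b ∈ B, p.getLast? = some b

def Sep (R : V → V → Prop) (A B : Set V) (S : Finset V) : Prop :=
  ∀ p, ABWalk R A B p → ∃ w ∈ S, w ∈ p

def DisjFam (R : V → V → Prop) (A B : Set V) (k : ℕ) : Prop :=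
  ∃ f : Fin k → List V, (∀ i, ABWalk R A B (f i)) ∧
    ∀ i j, i ≠ j → ∀ w, w ∈ f i → w ∈ f j → False

lemma head?_append_cons (l1 l2 l2' : List V) (a : V) :
    (l1 ++ a :: l2).head? = (l1 ++ a :: l2').head? := by
  cases l1 <;> simp

lemma head?_append_left {l : List V} (l' : List V) (h : l ≠ []) :
    (l ++ l').head? = l.head? := by
  cases l <;> simp_all

lemma getLast?_append_right {l : List V} (l' : List V) (h : l' ≠ []) :
    (l ++ l').getLast? = l'.getLast? := by
  rw [List.getLast?_append]
  cases hl : l'.getLast? with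
  | none => exact absurd (List.getLast?_eq_none_iff.mp hl) h
  | some b => simp

lemma mem_tail_append_cons {z : V} {m2 : List V} (m1 : List V) (a : V) (h : z ∈ m2) :
    z ∈ (m1 ++ a :: m2).tail := by
  cases m1 with
  | nil => simpa using h
  | cons b m1' => simp [List.mem_append, h]

lemma exists_firstHit {p : List V} {S : Finset V} (h : ∃ w ∈ S, w ∈ p) :
    ∃ l1 w l2, p = l1 ++ w :: l2 ∧ w ∈ S ∧ ∀ z ∈ l1, z ∉ S := by
  induction p with
  | nil => obtain ⟨w, _, hw⟩ := h; simp at hw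
  | cons a t ih =>
    by_cases haS : a ∈ S
    · exact ⟨[], a, t, by simp, haS, by simp⟩
    · obtain ⟨w, hwS, hwp⟩ := h
      have hwt : w ∈ t := by
        rcases List.mem_cons.mp hwp with rfl | h'
        · exact absurd hwS haS
        · exact h'
      obtain ⟨l1, w', l2, rfl, hw'S, hl1⟩ := ih ⟨w, hwS, hwt⟩
      exact ⟨a :: l1, w', l2, rfl, hw'S, by
        intro z hz
        rcases List.mem_cons.mp hz with rfl | h'
        · exact haS
        · exact hl1 z h'⟩

lemma exists_lastHit {p : List V} {S : Finset V} (h : ∃ w ∈ S, w ∈ p) :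
    ∃ l1 w l2, p = l1 ++ w :: l2 ∧ w ∈ S ∧ ∀ z ∈ l2, z ∉ S := by
  induction p with
  | nil => obtain ⟨w, _, hw⟩ := h; simp at hw
  | cons a t ih =>
    by_cases ht : ∃ w ∈ S, w ∈ t
    · obtain ⟨l1, w, l2, heq, hwS, hl2⟩ := ih ht
      exact ⟨a :: l1, w, l2, by rw [heq]; rfl, hwS, hl2⟩
    · obtain ⟨w, hwS, hwp⟩ := h
      have : w = a := by
        rcases List.mem_cons.mp hwp with rfl | h'
        · rfl
        · exact absurd ⟨w, hwS, h'⟩ ht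
      subst this
      exact ⟨[], w, t, rfl, hwS, fun z hz hzS => ht ⟨z, hzS, hz⟩⟩

lemma chain'_erase_fst [DecidableEq V] {E : Finset (V × V)} {u v : V} {p : List V}
    (h : p.Chain' (rel E)) (hu : u ∉ p.dropLast) : p.Chain' (rel (E.erase (u, v))) := by
  induction p with
  | nil => simp
  | cons a t ih =>
    cases t with
    | nil => simp
    | cons b t' =>
      rw [List.chain'_cons] at h ⊢
      have hadrop : a ∈ (a :: b :: t').dropLast := by simp
      have hau : a ≠ u := fun h' => hu (h' ▸ hadrop)
      refine ⟨Finset.mem_erase.mpr ⟨by simp [Prod.ext_iff, hau], h.1⟩, ih h.2 ?_⟩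
      intro hmem
      exact hu (by simp [List.dropLast_cons₂]; exact Or.inr (by simpa using hmem))

lemma chain'_erase_snd [DecidableEq V] {E : Finset (V × V)} {u v : V} {p : List V}
    (h : p.Chain' (rel E)) (hv : v ∉ p.tail) : p.Chain' (rel (E.erase (u, v))) := by
  induction p with
  | nil => simp
  | cons a t ih =>
    cases t with
    | nil => simp
    | cons b t' =>
      rw [List.chain'_cons] at h ⊢
      have hbv : b ≠ v := fun h' => hv (by simp [h'])
      refine ⟨Finset.mem_erase.mpr ⟨by simp [Prod.ext_iff, hbv], h.1⟩, ih h.2 ?_⟩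
      intro hmem
      exact hv (List.mem_of_mem_tail (by simpa using hmem))

lemma chain'_sub_or_split [DecidableEq V] {E : Finset (V × V)} {u v : V} {p : List V}
    (h : p.Chain' (rel E)) :
    p.Chain' (rel (E.erase (u, v))) ∨ ∃ l1 l2, p = l1 ++ u :: v :: l2 := by
  induction p with
  | nil => left; simp
  | cons a t ih =>
    cases t with
    | nil => left; simp
    | cons b t' =>
      rw [List.chain'_cons] at h
      rcases ih h.2 with h' | ⟨l1, l2, heq⟩
      · by_cases hab : (a, b) = (u, v)
        · obtain ⟨rfl, rfl⟩ := Prod.mk.injEq a b u v ▸ hab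
          exact Or.inr ⟨[], t', rfl⟩
        · exact Or.inl (List.chain'_cons.mpr ⟨Finset.mem_erase.mpr ⟨hab, h.1⟩, h'⟩)
      · exact Or.inr ⟨a :: l1, l2, by rw [heq]; rfl⟩

lemma chain'_rel_head_getLast {R : V → V → Prop} (tr : Transitive R) {p : List V}
    (h : p.Chain' R) {a b : V} (ha : p.head? = some a) (hb : p.getLast? = some b)
    (hne : a ≠ b) : R a b := by
  haveI : IsTrans V R := ⟨fun _ _ _ h1 h2 => tr h1 h2⟩
  have hp := List.chain'_iff_pairwise.mp h
  cases p with
  | nil => simp at ha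
  | cons c t =>
    rw [List.head?_cons, Option.some.injEq] at ha
    subst ha
    have hbt : b ∈ t := by
      rcases List.mem_cons.mp (List.mem_of_getLast? hb) with h' | h'
      · exact absurd h'.symm hne
      · exact h'
    exact (List.pairwise_cons.mp hp).1 b hbt

lemma nodup_of_chain'_lt {ρ : V → ℕ} {p : List V}
    (h : p.Chain' fun a b => ρ a < ρ b) : p.Nodup := by
  haveI : IsTrans V fun a b => ρ a < ρ b := ⟨fun x y z h1 h2 => h1.trans h2⟩
  exact (List.chain'_iff_pairwise.mp h).imp fun h' => fun heq => by simp [heq] at h'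

lemma mem_tail_reverse {l : List V} {z : V} (h : z ∈ l.reverse.tail) : z ∈ l.dropLast := by
  rcases List.eq_nil_or_concat l with rfl | ⟨l', a, rfl⟩
  · simp at h
  · simpa using (by simpa using h : z ∈ l'.reverse)


lemma fan {R : V → V → Prop} {A : Set V} {T : Finset V} {k : ℕ}
    (hT : T.card = k) (hfam : DisjFam R A (↑T) k) :
    ∃ P : {z // z ∈ T} → List V,
      (∀ w, (P w).Chain' R ∧ (∃ a ∈ A, (P w).head? = some a) ∧
        (P w).getLast? = some ↑w ∧ ∀ z ∈ (P w).dropLast, z ∉ T) ∧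
      ∀ w w', w ≠ w' → ∀ z, z ∈ P w → z ∈ P w' → False := by
  obtain ⟨f, hf, hdisj⟩ := hfam
  have H : ∀ i, ∃ l1 w l2, f i = l1 ++ w :: l2 ∧ w ∈ T ∧ ∀ z ∈ l1, z ∉ T := by
    intro i
    obtain ⟨_, _, b, hbT, hblast⟩ := hf i
    exact exists_firstHit ⟨b, hbT, List.mem_of_getLast? hblast⟩
  choose l1 w l2 heq hwT hl1 using H
  set g : Fin k → List V := fun i => l1 i ++ [w i] with hg
  have hgsub : ∀ i z, z ∈ g i → z ∈ f i := by
    intro i z hz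
    rw [heq i]
    rcases List.mem_append.mp hz with h' | h'
    · exact List.mem_append.mpr (Or.inl h')
    · simp at h'; simp [h']
  have hghead : ∀ i, (g i).head? = (f i).head? := by
    intro i; rw [heq i]; exact head?_append_cons (l1 i) [] (l2 i) (w i)
  have hglast : ∀ i, (g i).getLast? = some (w i) := fun i => List.getLast?_concat
  have hgchain : ∀ i, (g i).Chain' R := by
    intro i
    refine (hf i).1.prefix ?_
    rw [heq i]
    exact ⟨l2 i, by show (l1 i ++ [w i]) ++ l2 i = _; simp⟩
  have hgdrop : ∀ i z, z ∈ (g i).dropLast → z ∉ T := by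
    intro i z hz
    have : (g i).dropLast = l1 i := by
      rw [hg]; simp
    exact hl1 i z (this ▸ hz)
  have hinj : Function.Injective (fun i => (⟨w i, hwT i⟩ : {z // z ∈ T})) := by
    intro i j hij
    by_contra hne
    have hwij : w i = w j := congrArg Subtype.val hij
    exact hdisj i j hne (w i) (hgsub i _ (by simp [hg])) (hgsub j _ (by rw [hwij]; simp [hg]))
  have hbij : Function.Bijective (fun i => (⟨w i, hwT i⟩ : {z // z ∈ T})) := by
    rw [Fintype.bijective_iff_injective_and_card]
    exact ⟨hinj, by simp [Fintype.card_coe, hT]⟩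
  set e := Equiv.ofBijective _ hbij
  refine ⟨fun z => g (e.symm z), ?_, ?_⟩
  · intro z
    refine ⟨hgchain _, ?_, ?_, fun x hx => hgdrop _ x hx⟩
    · obtain ⟨_, ⟨a, haA, hha⟩, _⟩ := hf (e.symm z)
      exact ⟨a, haA, (hghead _).trans hha⟩
    · have : w (e.symm z) = (z : V) := congrArg Subtype.val (e.apply_symm_apply z)
      rw [hglast, this]
  · intro z z' hne x hx hx'
    have hne' : e.symm z ≠ e.symm z' := fun h => hne (by simpa using congrArg e h)
    exact hdisj _ _ hne' x (hgsub _ _ hx) (hgsub _ _ hx')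

lemma disjFam_reverse {R : V → V → Prop} {A B : Set V} {k : ℕ}
    (h : DisjFam R A B k) : DisjFam (fun a b => R b a) B A k := by
  obtain ⟨f, hf, hdisj⟩ := h
  refine ⟨fun i => (f i).reverse, fun i => ?_, fun i j hne x hx hx' =>
    hdisj i j hne x (by simpa using hx) (by simpa using hx')⟩
  obtain ⟨hc, ⟨a, haA, hha⟩, ⟨b, hbB, hbb⟩⟩ := hf i
  refine ⟨?_, ⟨b, hbB, by rw [List.head?_reverse]; exact hbb⟩,
    ⟨a, haA, by rw [List.getLast?_reverse]; exact hha⟩⟩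
  exact List.chain'_reverse.mpr (hc.imp fun a b h => h)

lemma fan' {R : V → V → Prop} {B : Set V} {T : Finset V} {k : ℕ}
    (hT : T.card = k) (hfam : DisjFam R (↑T) B k) :
    ∃ Q : {z // z ∈ T} → List V,
      (∀ w, (Q w).Chain' R ∧ (Q w).head? = some ↑w ∧
        (∃ b ∈ B, (Q w).getLast? = some b) ∧ ∀ z ∈ (Q w).tail, z ∉ T) ∧
      ∀ w w', w ≠ w' → ∀ z, z ∈ Q w → z ∈ Q w' → False := by
  obtain ⟨P, hP, hPdisj⟩ := fan (R := fun a b => R b a) (A := B) hT (disjFam_reverse hfam)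
  refine ⟨fun z => (P z).reverse, fun z => ?_, fun z z' hne x hx hx' =>
    hPdisj z z' hne x (by simpa using hx) (by simpa using hx')⟩
  obtain ⟨hc, ⟨a, haA, hha⟩, hlast, hdrop⟩ := hP z
  refine ⟨List.chain'_reverse.mpr (hc.imp fun a b h => h), by
      rw [List.head?_reverse]; exact hlast,
    ⟨a, haA, by rw [List.getLast?_reverse]; exact hha⟩, ?_⟩
  intro x hx
  exact hdrop x (mem_tail_reverse hx)

lemma menger_base [Fintype V] (A B : Set V) (k : ℕ)
    (hsep : ∀ S : Finset V, Sep (rel (∅ : Finset (V × V))) A B S → k ≤ S.card) :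
    DisjFam (rel (∅ : Finset (V × V))) A B k := by
  classical
  set S0 : Finset V := Finset.univ.filter (fun a => a ∈ A ∧ a ∈ B) with hS0def
  have hS0 : Sep (rel (∅ : Finset (V × V))) A B S0 := by
    rintro p ⟨hc, ⟨a, haA, hha⟩, ⟨b, hbB, hbb⟩⟩
    match p with
    | [] => simp at hha
    | [x] =>
      have hax : x = a := by simpa using hha
      have hbx : x = b := by simpa using hbb
      refine ⟨x, ?_, by simp⟩
      rw [hS0def]
      simp only [Finset.mem_filter, Finset.mem_univ, true_and]
      exact ⟨by rwa [hax], by rwa [hbx]⟩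
    | x :: y :: t =>
      rw [List.chain'_cons] at hc
      exact absurd hc.1 (by simp [rel])
  have hk : k ≤ S0.card := hsep _ hS0
  obtain ⟨T, hTsub, hTcard⟩ := Finset.exists_subset_card_eq hk
  set e := Finset.equivFinOfCardEq hTcard
  refine ⟨fun i => [((e.symm i : V))], fun i => ?_, ?_⟩
  · have hmem := (e.symm i).2
    have := Finset.mem_filter.mp (hTsub hmem)
    exact ⟨by simp, ⟨_, this.2.1, by simp⟩, ⟨_, this.2.2, by simp⟩⟩
  · intro i j hne x hx hx'
    simp only [List.mem_singleton] at hx hx'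
    exact hne (e.symm.injective (Subtype.ext (hx ▸ hx')))

lemma mem_dropLast_append_cons {z : V} {l1 : List V} (h : z ∈ l1) (a : V) (l2 : List V) :
    z ∈ (l1 ++ a :: l2).dropLast := by
  rw [List.dropLast_append]; simp [h]

lemma eq_getLast_of_mem_not_dropLast {x : V} {l : List V} (hx : x ∈ l)
    (hnd : x ∉ l.dropLast) : l.getLast? = some x := by
  induction l with
  | nil => simp at hx
  | cons a t ih =>
    cases t with
    | nil => simp at hx ⊢; exact hx.symm ▸ rfl
    | cons b t' =>
      have hxt : x ∈ b :: t' := by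
        rcases List.mem_cons.mp hx with rfl | h'
        · exact absurd (by simp [List.dropLast_cons₂]) hnd
        · exact h'
      have hnd' : x ∉ (b :: t').dropLast := fun h =>
        hnd (by rw [List.dropLast_cons₂]; exact List.mem_cons_of_mem a h)
      rw [List.getLast?_cons_cons]
      exact ih hxt hnd'

lemma eq_head_of_mem_not_tail {x : V} {l : List V} (hx : x ∈ l) (hnt : x ∉ l.tail) :
    l.head? = some x := by
  cases l with
  | nil => simp at hx
  | cons a t =>
    rcases List.mem_cons.mp hx with rfl | h'
    · rfl
    · exact absurd h' hnt

lemma getLast?_append_tail {l m : List V} (hlink : l.getLast? = m.head?) :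
    m ≠ [] → (l ++ m.tail).getLast? = m.getLast? := by
  intro hm
  cases m with
  | nil => simp at hm
  | cons a t =>
    cases t with
    | nil => simpa using hlink
    | cons b t' =>
      rw [List.getLast?_cons_cons]
      exact getLast?_append_right _ (by simp)

lemma chain'_append_tail {R : V → V → Prop} {l m : List V} (hl : l.Chain' R)
    (hm : m.Chain' R) (hlink : l.getLast? = m.head?) : (l ++ m.tail).Chain' R := by
  cases m with
  | nil => simpa using hl
  | cons a t =>
    refine hl.append hm.tail ?_
    intro xx hxx yy hyy
    rw [hlink] at hxx
    simp only [List.head?_cons, Option.mem_def, Option.some.injEq] at hxx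
    subst hxx
    cases t with
    | nil => simp at hyy
    | cons b t' =>
      simp only [List.tail_cons, List.head?_cons, Option.mem_def, Option.some.injEq] at hyy
      subst hyy
      exact (List.chain'_cons.mp hm).1

theorem menger [Fintype V] [DecidableEq V] : ∀ (N : ℕ) (E : Finset (V × V)), E.card ≤ N →
    ∀ (A B : Set V) (k : ℕ), (∀ S : Finset V, Sep (rel E) A B S → k ≤ S.card) →
    DisjFam (rel E) A B k := by
  intro N
  induction N with
  | zero =>
    intro E hE A B k hsep
    obtain rfl : E = ∅ := Finset.card_eq_zero.mp (Nat.le_zero.mp hE)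
    exact menger_base A B k hsep
  | succ n ih =>
    intro E hcard A B k hsep
    by_cases hE : E = ∅
    · subst hE; exact menger_base A B k hsep
    obtain ⟨⟨u, v⟩, he⟩ := Finset.nonempty_iff_ne_empty.mpr hE
    set E' := E.erase (u, v) with hE'def
    have hsubrel : ∀ a b : V, rel E' a b → rel E a b := fun a b h => Finset.mem_of_mem_erase h
    have hcard' : E'.card ≤ n := by
      have h1 : E'.card = E.card - 1 := by rw [hE'def]; exact Finset.card_erase_of_mem he
      have h2 : 1 ≤ E.card := Finset.card_pos.mpr ⟨_, he⟩
      omega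
    by_cases hsep' : ∀ S : Finset V, Sep (rel E') A B S → k ≤ S.card
    · obtain ⟨f, hf, hdisj⟩ := ih E' hcard' A B k hsep'
      exact ⟨f, fun i => ⟨(hf i).1.imp hsubrel, (hf i).2⟩, hdisj⟩
    push_neg at hsep'
    obtain ⟨S', hS'sep, hS'lt⟩ := hsep'
    have hSepU : Sep (rel E) A B (insert u S') := by
      rintro p hp
      rcases chain'_sub_or_split (u := u) (v := v) hp.1 with h' | ⟨l1, l2, rfl⟩
      · obtain ⟨w, hwS, hwp⟩ := hS'sep p ⟨h', hp.2⟩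
        exact ⟨w, Finset.mem_insert_of_mem hwS, hwp⟩
      · exact ⟨u, Finset.mem_insert_self u S', by simp⟩
    have hSepV : Sep (rel E) A B (insert v S') := by
      rintro p hp
      rcases chain'_sub_or_split (u := u) (v := v) hp.1 with h' | ⟨l1, l2, rfl⟩
      · obtain ⟨w, hwS, hwp⟩ := hS'sep p ⟨h', hp.2⟩
        exact ⟨w, Finset.mem_insert_of_mem hwS, hwp⟩
      · exact ⟨v, Finset.mem_insert_self v S', by simp⟩
    have huS' : u ∉ S' := by
      intro hu
      have h1 := hsep _ hSepU
      rw [Finset.insert_eq_self.mpr hu] at h1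
      omega
    have hvS' : v ∉ S' := by
      intro hv
      have h1 := hsep _ hSepV
      rw [Finset.insert_eq_self.mpr hv] at h1
      omega
    set Su := insert u S' with hSudef
    set Sv := insert v S' with hSvdef
    have hcardSu : Su.card = k := by
      have h1 := hsep _ hSepU
      have h2 := Finset.card_insert_of_notMem huS'
      rw [← hSudef] at h2
      omega
    have hcardSv : Sv.card = k := by
      have h1 := hsep _ hSepV
      have h2 := Finset.card_insert_of_notMem hvS'
      rw [← hSvdef] at h2
      omega
    have hsepASu : ∀ T : Finset V, Sep (rel E') A (↑Su) T → k ≤ T.card := by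
      intro T hT
      apply hsep
      intro p hp
      obtain ⟨w0, hw0Su, hw0p⟩ := hSepU p hp
      obtain ⟨hpc, ⟨a, haA, hha⟩, -⟩ := hp
      obtain ⟨l1, w, l2, heq, hwSu, hl1⟩ := exists_firstHit ⟨w0, hw0Su, hw0p⟩
      have hq : ABWalk (rel E') A (↑Su) (l1 ++ [w]) := by
        refine ⟨?_, ⟨a, haA, ?_⟩, ⟨w, hwSu, List.getLast?_concat⟩⟩
        · refine chain'_erase_fst (hpc.prefix ⟨l2, by rw [heq]; simp⟩) ?_
          rw [List.dropLast_concat]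
          exact fun h => hl1 u h (by rw [hSudef]; exact Finset.mem_insert_self u S')
        · rw [head?_append_cons l1 [] l2 w, ← heq]
          exact hha
      obtain ⟨z, hzT, hzq⟩ := hT _ hq
      refine ⟨z, hzT, ?_⟩
      rw [heq]
      rcases List.mem_append.mp hzq with h' | h'
      · exact List.mem_append.mpr (Or.inl h')
      · simp only [List.mem_singleton] at h'
        simp [h']
    have hsepSvB : ∀ T : Finset V, Sep (rel E') (↑Sv) B T → k ≤ T.card := by
      intro T hT
      apply hsep
      intro p hp
      obtain ⟨w0, hw0Sv, hw0p⟩ := hSepV p hp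
      obtain ⟨hpc, -, ⟨b, hbB, hbb⟩⟩ := hp
      obtain ⟨l1, w, l2, heq, hwSv, hl2⟩ := exists_lastHit ⟨w0, hw0Sv, hw0p⟩
      have hq : ABWalk (rel E') (↑Sv) B (w :: l2) := by
        refine ⟨?_, ⟨w, hwSv, rfl⟩, ⟨b, hbB, ?_⟩⟩
        · refine chain'_erase_snd (hpc.suffix ⟨l1, heq.symm⟩) ?_
          exact fun h => hl2 v (by simpa using h) (by rw [hSvdef]; exact Finset.mem_insert_self v S')
        · have h3 := getLast?_append_right (l := l1) (w :: l2) (by simp)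
          rw [← heq] at h3
          rw [← h3]
          exact hbb
      obtain ⟨z, hzT, hzq⟩ := hT _ hq
      refine ⟨z, hzT, ?_⟩
      rw [heq]
      exact List.mem_append.mpr (Or.inr hzq)
    have famA := ih E' hcard' A (↑Su) k hsepASu
    have famB := ih E' hcard' (↑Sv) B k hsepSvB
    obtain ⟨P, hP, hPdisj⟩ := fan hcardSu famA
    obtain ⟨Q, hQ, hQdisj⟩ := fan' hcardSv famB
    have hcross : ∀ (w : {z // z ∈ Su}) (z : {z // z ∈ Sv}) (x0 : V),
        x0 ∈ P w → x0 ∈ Q z → x0 ∈ S' := by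
      intro w z x0 hxP hxQ
      by_contra hxS
      obtain ⟨l1, l2, hPd⟩ := List.append_of_mem hxP
      obtain ⟨m1, m2, hQd⟩ := List.append_of_mem hxQ
      obtain ⟨hPc, ⟨a, haA, hha⟩, hPlast, hPdrop⟩ := hP w
      obtain ⟨hQc, hQhead, ⟨b, hbB, hbb⟩, hQtail⟩ := hQ z
      have hcomp : ABWalk (rel E') A B (l1 ++ x0 :: m2) := by
        refine ⟨?_, ⟨a, haA, ?_⟩, ⟨b, hbB, ?_⟩⟩
        · have h1 : (l1 ++ [x0]).Chain' (rel E') := hPc.prefix ⟨l2, by rw [hPd]; simp⟩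
          have h2 : (x0 :: m2).Chain' (rel E') := hQc.suffix ⟨m1, hQd.symm⟩
          have h3 : l1 ++ x0 :: m2 = (l1 ++ [x0]) ++ m2 := by simp
          rw [h3]
          exact chain'_append_tail h1 h2 (by rw [List.getLast?_concat]; rfl) |>.imp fun a b h => h
        · rw [head?_append_cons l1 m2 l2 x0, ← hPd]
          exact hha
        · have h3 := getLast?_append_right (l := l1) (x0 :: m2) (by simp)
          have h4 := getLast?_append_right (l := m1) (x0 :: m2) (by simp)
          rw [← hQd] at h4
          rw [h3, ← h4]
          exact hbb
      obtain ⟨z0, hz0S, hz0mem⟩ := hS'sep _ hcomp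
      rcases List.mem_append.mp hz0mem with h' | h'
      · have hmem : z0 ∈ (P w).dropLast := by
          rw [hPd]; exact mem_dropLast_append_cons h' x0 l2
        exact hPdrop z0 hmem (by rw [hSudef]; exact Finset.mem_insert_of_mem hz0S)
      · rcases List.mem_cons.mp h' with rfl | h''
        · exact hxS hz0S
        · have hmem : z0 ∈ (Q z).tail := by
            rw [hQd]; exact mem_tail_append_cons m1 x0 h''
          exact hQtail z0 hmem (by rw [hSvdef]; exact Finset.mem_insert_of_mem hz0S)
    have hvSv : v ∈ Sv := by rw [hSvdef]; exact Finset.mem_insert_self v S'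
    have hmemSv : ∀ w : {z // z ∈ Su}, (w : V) ≠ u → (w : V) ∈ Sv := by
      intro w h
      have hmem : (w : V) ∈ insert u S' := by rw [← hSudef]; exact w.2
      rcases Finset.mem_insert.mp hmem with h' | h'
      · exact absurd h' h
      · exact (by rw [hSvdef]; exact Finset.mem_insert_of_mem h' : (w : V) ∈ Sv)
    classical
    set C : {z // z ∈ Su} → List V := fun w =>
      if h : (w : V) = u then P w ++ Q ⟨v, hvSv⟩
      else P w ++ (Q ⟨(w : V), hmemSv w h⟩).tail with hCdef
    have hPne : ∀ w : {z // z ∈ Su}, P w ≠ [] := by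
      intro w h
      have h1 := (hP w).2.2.1
      rw [h] at h1; simp at h1
    have hQne : ∀ z : {z // z ∈ Sv}, Q z ≠ [] := by
      intro z h
      have h1 := (hQ z).2.1
      rw [h] at h1; simp at h1
    have hCwalk : ∀ w, ABWalk (rel E) A B (C w) := by
      intro w
      obtain ⟨hPc, ⟨a, haA, hha⟩, hPlast, hPdrop⟩ := hP w
      by_cases h : (w : V) = u
      · simp only [hCdef]; simp only [dif_pos h]
        obtain ⟨hQc, hQhead, ⟨b, hbB, hbb⟩, hQtail⟩ := hQ ⟨v, hvSv⟩
        refine ⟨?_, ⟨a, haA, by rw [head?_append_left _ (hPne w)]; exact hha⟩,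
          ⟨b, hbB, by rw [getLast?_append_right _ (hQne _)]; exact hbb⟩⟩
        refine (hPc.imp hsubrel).append (hQc.imp hsubrel) ?_
        intro xx hxx yy hyy
        rw [hPlast] at hxx
        rw [hQhead] at hyy
        simp only [Option.mem_def, Option.some.injEq] at hxx hyy
        subst hxx; subst hyy
        show ((w : V), (v : V)) ∈ E
        rw [h]
        exact he
      · simp only [hCdef]; simp only [dif_neg h]
        obtain ⟨hQc, hQhead, ⟨b, hbB, hbb⟩, hQtail⟩ := hQ ⟨(w : V), hmemSv w h⟩
        have hlink : (P w).getLast? = (Q ⟨(w : V), hmemSv w h⟩).head? := by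
          rw [hPlast, hQhead]
        refine ⟨(chain'_append_tail hPc hQc hlink).imp hsubrel,
          ⟨a, haA, by rw [head?_append_left _ (hPne w)]; exact hha⟩,
          ⟨b, hbB, by rw [getLast?_append_tail hlink (hQne _)]; exact hbb⟩⟩
    have hPS' : ∀ (w) (x0 : V), x0 ∈ P w → x0 ∈ S' → x0 = (w : V) := by
      intro w x0 hx hxS
      have h1 : x0 ∉ (P w).dropLast := fun h =>
        (hP w).2.2.2 x0 h (by rw [hSudef]; exact Finset.mem_insert_of_mem hxS)
      exact Option.some.inj ((eq_getLast_of_mem_not_dropLast hx h1).symm.trans (hP w).2.2.1)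
    have hQS' : ∀ (z) (x0 : V), x0 ∈ Q z → x0 ∈ S' → x0 = (z : V) := by
      intro z x0 hx hxS
      have h1 : x0 ∉ (Q z).tail := fun h =>
        (hQ z).2.2.2 x0 h (by rw [hSvdef]; exact Finset.mem_insert_of_mem hxS)
      exact Option.some.inj ((eq_head_of_mem_not_tail hx h1).symm.trans (hQ z).2.1)
    have hCmem : ∀ (w) (x0 : V), x0 ∈ C w → x0 ∈ P w ∨
        ((w : V) = u ∧ x0 ∈ Q ⟨v, hvSv⟩) ∨
        (∃ h : (w : V) ≠ u, x0 ∈ Q ⟨(w : V), hmemSv w h⟩) := by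
      intro w x0 hx
      simp only [hCdef] at hx
      by_cases h : (w : V) = u
      · rw [dif_pos h] at hx
        rcases List.mem_append.mp hx with h' | h'
        · exact Or.inl h'
        · exact Or.inr (Or.inl ⟨h, h'⟩)
      · rw [dif_neg h] at hx
        rcases List.mem_append.mp hx with h' | h'
        · exact Or.inl h'
        · exact Or.inr (Or.inr ⟨h, List.mem_of_mem_tail h'⟩)
    -- cross-kill: P w and Q-of-w' share nothing when w ≠ w'
    have hkill : ∀ (w w' : {z // z ∈ Su}), w ≠ w' → ∀ (z' : {z // z ∈ Sv}),
        ((w' : V) = u ∧ (z' : V) = v ∨ (w' : V) ≠ u ∧ (z' : V) = (w' : V)) →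
        ∀ x0, x0 ∈ P w → x0 ∈ Q z' → False := by
      intro w w' hne z' htag x0 hxP hxQ
      have hxS' : x0 ∈ S' := hcross w z' x0 hxP hxQ
      have h1 : x0 = (w : V) := hPS' w x0 hxP hxS'
      have h2 : x0 = (z' : V) := hQS' z' x0 hxQ hxS'
      rcases htag with ⟨-, hz⟩ | ⟨-, hz⟩
      · rw [hz] at h2
        exact hvS' (h2 ▸ hxS')
      · rw [hz] at h2
        exact hne (Subtype.ext (h1.symm.trans h2))
    have hCdisj : ∀ w w', w ≠ w' → ∀ x0, x0 ∈ C w → x0 ∈ C w' → False := by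
      intro w w' hne x0 hx hx'
      have tag : ∀ (ww : {z // z ∈ Su}), x0 ∈ C ww → x0 ∈ P ww ∨
          ∃ z : {z // z ∈ Sv}, ((ww : V) = u ∧ (z : V) = v ∨ (ww : V) ≠ u ∧ (z : V) = (ww : V))
            ∧ x0 ∈ Q z := by
        intro ww hxw
        rcases hCmem ww x0 hxw with h1 | ⟨h1, h2⟩ | ⟨h1, h2⟩
        · exact Or.inl h1
        · exact Or.inr ⟨⟨v, hvSv⟩, Or.inl ⟨h1, rfl⟩, h2⟩
        · exact Or.inr ⟨⟨(ww : V), hmemSv ww h1⟩, Or.inr ⟨h1, rfl⟩, h2⟩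
      rcases tag w hx with h1 | ⟨z1, htag1, h1⟩
      · rcases tag w' hx' with h2 | ⟨z2, htag2, h2⟩
        · exact hPdisj w w' hne x0 h1 h2
        · exact hkill w w' hne z2 htag2 x0 h1 h2
      · rcases tag w' hx' with h2 | ⟨z2, htag2, h2⟩
        · exact hkill w' w (Ne.symm hne) z1 htag1 x0 h2 h1
        · -- both Q's
          have hz12 : z1 ≠ z2 := by
            intro hz
            have hzz : (z1 : V) = (z2 : V) := congrArg Subtype.val hz
            rcases htag1 with ⟨hw1, hv1⟩ | ⟨hw1, hv1⟩ <;>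
              rcases htag2 with ⟨hw2, hv2⟩ | ⟨hw2, hv2⟩
            · exact hne (Subtype.ext (hw1.trans hw2.symm))
            · have hwv : (w' : V) = v := hv2.symm.trans (hzz.symm.trans hv1)
              have hmem : (w' : V) ∈ insert u S' := by rw [← hSudef]; exact w'.2
              rcases Finset.mem_insert.mp hmem with h' | h'
              · exact hw2 h'
              · rw [hwv] at h'; exact hvS' h'
            · have hwv : (w : V) = v := hv1.symm.trans (hzz.trans hv2)
              have hmem : (w : V) ∈ insert u S' := by rw [← hSudef]; exact w.2
              rcases Finset.mem_insert.mp hmem with h' | h'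
              · exact hw1 h'
              · rw [hwv] at h'; exact hvS' h'
            · exact hne (Subtype.ext (hv1.symm.trans (hzz.trans hv2)))
          exact hQdisj z1 z2 hz12 x0 h1 h2
    set eSu := Finset.equivFinOfCardEq hcardSu
    exact ⟨fun i => C (eSu.symm i), fun i => hCwalk _, fun i j hne x0 hx hx' =>
      hCdisj _ _ (fun hh => hne (by simpa using congrArg eSu hh)) x0 hx hx'⟩


lemma chain'_and {R S : V → V → Prop} : ∀ {l : List V}, l.Chain' R → l.Chain' S →
    l.Chain' (fun a b => R a b ∧ S a b) := by
  intro l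
  induction l with
  | nil => intro _ _; simp
  | cons a t ih =>
    intro h1 h2
    cases t with
    | nil => simp
    | cons b t' =>
      rw [List.chain'_cons] at h1 h2 ⊢
      exact ⟨⟨h1.1, h2.1⟩, ih h1.2 h2.2⟩

lemma chain'_imp_mem {R S : V → V → Prop} : ∀ {l : List V}, l.Chain' R →
    (∀ a b, a ∈ l → b ∈ l → R a b → S a b) → l.Chain' S := by
  intro l
  induction l with
  | nil => intro _ _; simp
  | cons a t ih =>
    intro h1 h2
    cases t with
    | nil => simp
    | cons b t' =>
      rw [List.chain'_cons] at h1 ⊢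
      refine ⟨h2 a b (by simp) (by simp) h1.1, ih h1.2 ?_⟩
      intro a' b' ha' hb' hr
      exact h2 a' b' (List.mem_cons_of_mem _ ha') (List.mem_cons_of_mem _ hb') hr

lemma chain'_cons_of_head? {R : V → V → Prop} {x a : V} {l : List V}
    (h1 : l.head? = some a) (h2 : R x a) (h3 : l.Chain' R) : (x :: l).Chain' R := by
  cases l with
  | nil => simp at h1
  | cons b t =>
    simp only [List.head?_cons, Option.some.injEq] at h1
    subst h1
    exact List.chain'_cons.mpr ⟨h2, h3⟩

lemma mem_chain'_prop {R : V → V → Prop} {P : V → Prop}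
    (hR : ∀ a b, R a b → P a ∧ P b) :
    ∀ (l : List V) (a : V), l.head? = some a → l.Chain' R → P a → ∀ z ∈ l, P z := by
  intro l
  induction l with
  | nil => intro a ha; simp at ha
  | cons b t ih =>
    intro a ha hc hPa z hz
    simp only [List.head?_cons, Option.some.injEq] at ha
    subst ha
    rcases List.mem_cons.mp hz with rfl | hz'
    · exact hPa
    · cases t with
      | nil => simp at hz'
      | cons b' t' =>
        rw [List.chain'_cons] at hc
        exact ih b' rfl hc.2 (hR _ _ hc.1).2 z hz'
end PCMHelp



namespace PCMGraph
open PCMHelp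

set_option linter.unusedSectionVars false

variable {V : Type*} {c : ℕ}

lemma colorList_eq {G : SimpleGraph V} (col : V → V → Fin c) {a b : V} (w : G.Walk a b) :
    colorList G col w = (w.support.zip w.support.tail).map fun q => col q.1 q.2 := by
  induction w with
  | nil => simp [colorList]
  | cons h p ih =>
    simp only [colorList, Walk.darts_cons, List.map_cons, Walk.support_cons, List.tail_cons]
    conv_rhs => rw [p.support_eq_cons]
    simp only [List.zip_cons_cons, List.map_cons]
    rw [← p.support_eq_cons]
    simp only [colorList] at ih
    rw [ih]

lemma head?_support {G : SimpleGraph V} {a b : V} (p : G.Walk a b) :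
    p.support.head? = some a := by
  rw [p.support_eq_cons]; rfl

lemma getLast?_support {G : SimpleGraph V} {a b : V} (p : G.Walk a b) :
    p.support.getLast? = some b := by
  rw [List.getLast?_eq_getLast p.support_ne_nil, p.getLast_support]

lemma colorList_reverse {G : SimpleGraph V} {col : V → V → Fin c}
    (hsym : ∀ u v, col u v = col v u) {a b : V} (p : G.Walk a b) :
    colorList G col p.reverse = (colorList G col p).reverse := by
  simp only [colorList, Walk.darts_reverse, List.map_reverse]
  congr 1
  rw [List.map_map]
  refine List.map_congr_left ?_
  intro d _
  simp only [Function.comp_apply, Dart.symm_toProd, Prod.fst_swap, Prod.snd_swap]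
  exact hsym _ _

lemma isPCOpen_reverse {G : SimpleGraph V} {col : V → V → Fin c}
    (hsym : ∀ u v, col u v = col v u) {a b : V} (p : G.Walk a b)
    (h : IsPCOpen G col p) : IsPCOpen G col p.reverse := by
  unfold IsPCOpen at *
  rw [colorList_reverse hsym, List.chain'_reverse]
  exact h.imp fun a b hne => Ne.symm hne

lemma mono_of_pc {G : SimpleGraph V} {col : V → V → Fin c} {r : V → ℕ}
    (hsym : ∀ u v, col u v = col v u) (hinj : Function.Injective r)
    (h3 : Ordering3 G col r)
    (h4 : ∀ u v w, G.Adj u v → G.Adj u w → r v < r u → r w < r u → col u v = col u w) :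
    ∀ l : List V, l.Chain' G.Adj →
      ((l.zip l.tail).map fun q => col q.1 q.2).Chain' (· ≠ ·) →
      l.Chain' (fun a b => r a < r b) ∨ l.Chain' (fun a b => r b < r a) := by
  intro l
  induction l with
  | nil => exact fun _ _ => Or.inl (by simp)
  | cons a t ih =>
    intro hadj hpc
    cases t with
    | nil => exact Or.inl (by simp)
    | cons b t' =>
      have hab : G.Adj a b := (List.chain'_cons.mp hadj).1
      have hrab : r a ≠ r b := fun h => hab.ne (hinj h)
      have hadj' : (b :: t').Chain' G.Adj := hadj.tail
      have hpc' : (((b :: t').zip (b :: t').tail).map fun q => col q.1 q.2).Chain' (· ≠ ·) := by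
        have h0 := hpc.tail
        simp only [List.zip_cons_cons, List.map_cons, List.tail_cons] at h0 ⊢
        exact h0
      cases t' with
      | nil =>
        rcases lt_or_gt_of_ne hrab with h | h
        · exact Or.inl (by simp [h])
        · exact Or.inr (by simp [h])
      | cons cc t'' =>
        have hbc : G.Adj b cc := (List.chain'_cons.mp hadj').1
        have hcol : col a b ≠ col b cc := by
          simp only [List.zip_cons_cons, List.map_cons, List.tail_cons, List.chain'_cons] at hpc
          exact hpc.1
        rcases ih hadj' hpc' with hup | hdown
        · have hrbc : r b < r cc := (List.chain'_cons.mp hup).1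
          have hrba : ¬ r b < r a := fun h =>
            hcol ((hsym a b).trans (h3 b a cc hab.symm hbc h hrbc))
          exact Or.inl (List.chain'_cons.mpr
            ⟨lt_of_le_of_ne (not_lt.mp hrba) hrab, hup⟩)
        · have hrcb : r cc < r b := (List.chain'_cons.mp hdown).1
          have hnab : ¬ r a < r b := fun h =>
            hcol ((hsym a b).trans (h4 b a cc hab.symm hbc h hrcb))
          exact Or.inr (List.chain'_cons.mpr
            ⟨lt_of_le_of_ne (not_lt.mp hnab) (Ne.symm hrab), hdown⟩)

lemma internal_not_bad {G : SimpleGraph V} {col : V → V → Fin c} {r : V → ℕ}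
    (hsym : ∀ u v, col u v = col v u)
    (h3 : Ordering3 G col r)
    (h4 : ∀ u v w, G.Adj u v → G.Adj u w → r v < r u → r w < r u → col u v = col u w) :
    ∀ l : List V, l.Chain' G.Adj →
      ((l.zip l.tail).map fun q => col q.1 q.2).Chain' (· ≠ ·) →
      l.Chain' (fun a b => r a < r b) →
      ∀ z ∈ l.tail.dropLast,
        ¬∃ a b, G.Adj z a ∧ G.Adj z b ∧ r a < r z ∧ r z < r b ∧ col z a = col z b := by
  intro l
  induction l with
  | nil => simp
  | cons a t ih =>
    intro hadj hpc hup z hz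
    cases t with
    | nil => simp at hz
    | cons b t' =>
      cases t' with
      | nil => simp at hz
      | cons cc t'' =>
        have hpc' : (((b :: cc :: t'').zip (b :: cc :: t'').tail).map
            fun q => col q.1 q.2).Chain' (· ≠ ·) := by
          have h0 := hpc.tail
          simp only [List.zip_cons_cons, List.map_cons, List.tail_cons] at h0 ⊢
          exact h0
        have hz' : z = b ∨ z ∈ (cc :: t'').dropLast := by
          simpa [List.dropLast_cons₂] using hz
        rcases hz' with rfl | hz' 
        · rintro ⟨a', b', haz, hbz, hra, hrb, hcol⟩
          have hab : G.Adj a z := (List.chain'_cons.mp hadj).1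
          have hbc : G.Adj z cc := (List.chain'_cons.mp hadj.tail).1
          have hpcab : col a z ≠ col z cc := by
            simp only [List.zip_cons_cons, List.map_cons, List.tail_cons,
              List.chain'_cons] at hpc
            exact hpc.1
          have h1 : r a < r z := (List.chain'_cons.mp hup).1
          have h2 : r z < r cc := (List.chain'_cons.mp hup.tail).1
          have e1 : col z a = col z a' := h4 z a a' hab.symm haz h1 hra
          have e2 : col z cc = col z b' := h3 z cc b' hbc hbz h2 hrb
          exact hpcab ((hsym a z).trans (e1.trans (hcol.trans e2.symm)))
        · exact ih hadj.tail hpc' hup.tail z (by simpa using hz')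


def BadV (G : SimpleGraph V) (col : V → V → Fin c) (r : V → ℕ) (z : V) : Prop :=
  ∃ a b, G.Adj z a ∧ G.Adj z b ∧ r a < r z ∧ r z < r b ∧ col z a = col z b

def DRel (G : SimpleGraph V) (col : V → V → Fin c) (r : V → ℕ) (x y : V) (a b : V) : Prop :=
  G.Adj a b ∧ r a < r b ∧ ¬ BadV G col r a ∧ ¬ BadV G col r b ∧
    a ≠ x ∧ a ≠ y ∧ b ≠ x ∧ b ≠ y

def ASet (G : SimpleGraph V) (col : V → V → Fin c) (r : V → ℕ) (x y : V) : Set V :=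
  {a | G.Adj x a ∧ r x < r a ∧ ¬ BadV G col r a ∧ a ≠ x ∧ a ≠ y}

def BSet (G : SimpleGraph V) (col : V → V → Fin c) (r : V → ℕ) (x y : V) : Set V :=
  {b | G.Adj b y ∧ r b < r y ∧ ¬ BadV G col r b ∧ b ≠ x ∧ b ≠ y}

lemma pc_of_good {G : SimpleGraph V} {col : V → V → Fin c} {r : V → ℕ}
    (hsym : ∀ u v, col u v = col v u)
    (h3 : Ordering3 G col r)
    (h4 : ∀ u v w, G.Adj u v → G.Adj u w → r v < r u → r w < r u → col u v = col u w) :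
    ∀ l : List V, l.Chain' G.Adj → l.Chain' (fun a b => r a < r b) →
      (∀ z ∈ l.tail.dropLast,
        ¬∃ a b, G.Adj z a ∧ G.Adj z b ∧ r a < r z ∧ r z < r b ∧ col z a = col z b) →
      ((l.zip l.tail).map fun q => col q.1 q.2).Chain' (· ≠ ·) := by
  intro l
  induction l with
  | nil => simp
  | cons a t ih =>
    intro hadj hup hgood
    cases t with
    | nil => simp
    | cons b t' =>
      cases t' with
      | nil => simp
      | cons cc t'' =>
        have hab : G.Adj a b := (List.chain'_cons.mp hadj).1
        have hbc : G.Adj b cc := (List.chain'_cons.mp hadj.tail).1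
        have h1 : r a < r b := (List.chain'_cons.mp hup).1
        have h2 : r b < r cc := (List.chain'_cons.mp hup.tail).1
        have hbgood := hgood b (by simp [List.dropLast_cons₂])
        have hne : col a b ≠ col b cc := by
          intro h
          exact hbgood ⟨a, cc, hab.symm, hbc, h1, h2, (hsym b a).trans h⟩
        have ihres := ih hadj.tail hup.tail (by
          intro z hz
          exact hgood z (by
            simp only [List.tail_cons] at hz ⊢
            rw [List.dropLast_cons₂]
            exact List.mem_cons_of_mem _ hz))
        simp only [List.zip_cons_cons, List.map_cons, List.tail_cons,
          List.chain'_cons] at ihres ⊢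
        exact ⟨hne, ihres⟩

lemma exists_walk_of_chain {G : SimpleGraph V} :
    ∀ (l : List V) (a b : V), List.Chain G.Adj a l →
      (a :: l).getLast? = some b → ∃ w : G.Walk a b, w.support = a :: l := by
  intro l
  induction l with
  | nil =>
    intro a b _ hlast
    simp only [List.getLast?_singleton, Option.some.injEq] at hlast
    subst hlast
    exact ⟨Walk.nil, by simp⟩
  | cons b' t ih =>
    intro a b hc hlast
    have hc : G.Adj a b' ∧ List.Chain G.Adj b' t := List.isChain_cons_cons.mp hc
    rw [List.getLast?_cons_cons] at hlast
    obtain ⟨w, hw⟩ := ih b' b hc.2 hlast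
    exact ⟨Walk.cons hc.1 w, by simp [hw]⟩


lemma decompose_pc_path {G : SimpleGraph V} {col : V → V → Fin c} {r : V → ℕ}
    (hsym : ∀ u v, col u v = col v u) (hinj : Function.Injective r)
    (h3 : Ordering3 G col r)
    (h4 : ∀ u v w, G.Adj u v → G.Adj u w → r v < r u → r w < r u → col u v = col u w)
    {x y : V} (hxy : x ≠ y) (hrxy : r x < r y) (hnadj : ¬ G.Adj x y)
    (p : G.Walk x y) (hpath : p.IsPath) (hpc : IsPCOpen G col p) :
    ∃ l : List V, l.Chain' (DRel G col r x y) ∧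
      (∃ a ∈ ASet G col r x y, l.head? = some a) ∧
      (∃ b ∈ BSet G col r x y, l.getLast? = some b) ∧
      ∀ z ∈ l, z ∈ p.support ∧ z ≠ x ∧ z ≠ y := by
  have hadj : p.support.Chain' G.Adj := p.isChain_adj_support
  have hpcl : ((p.support.zip p.support.tail).map fun q => col q.1 q.2).Chain' (· ≠ ·) := by
    rw [← colorList_eq]
    exact hpc
  have hup : p.support.Chain' (fun a b => r a < r b) := by
    rcases mono_of_pc hsym hinj h3 h4 p.support hadj hpcl with h | h
    · exact h
    · exfalso
      have htr : Transitive (fun a b : V => r b < r a) := fun a b cc h1 h2 => h2.trans h1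
      have := PCMHelp.chain'_rel_head_getLast htr h (head?_support p) (getLast?_support p) hxy
      omega
  have hm : p.support = x :: p.support.tail := p.support_eq_cons
  have hmne : p.support.tail ≠ [] := by
    intro h0
    have h1 := getLast?_support p
    rw [hm, h0] at h1
    simp only [List.getLast?_singleton, Option.some.injEq] at h1
    exact hxy h1
  have hgl : p.support.tail.getLast hmne = y := by
    have h2 := List.getLast?_eq_getLast hmne
    have h1 := getLast?_support p
    rw [hm] at h1
    rw [show x :: p.support.tail = [x] ++ p.support.tail from rfl,
      PCMHelp.getLast?_append_right _ hmne, h2] at h1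
    exact (Option.some.inj h1)
  obtain ⟨l, hdecomp⟩ : ∃ l, p.support.tail = l ++ [y] :=
    ⟨p.support.tail.dropLast, by
      have h5 := List.dropLast_append_getLast hmne
      rw [hgl] at h5
      exact h5.symm⟩
  have hsupp : p.support = x :: l ++ [y] := by rw [hm, hdecomp]; rfl
  have hnotbad : ∀ z ∈ l, ¬ BadV G col r z := by
    intro z hz
    exact internal_not_bad hsym h3 h4 p.support hadj hpcl hup z
      (by rw [hm]; simp only [List.tail_cons]; rw [hdecomp, List.dropLast_concat]; exact hz)
  have hnodup := (Walk.isPath_def p).mp hpath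
  rw [hsupp] at hnodup
  have hmem : ∀ z ∈ l, z ≠ x ∧ z ≠ y := by
    intro z hz
    have h1 : x ∉ l ++ [y] := (List.nodup_cons.mp hnodup).1
    have h2 : (l ++ [y]).Nodup := (List.nodup_cons.mp hnodup).2
    refine ⟨fun h0 => h1 (by rw [← h0]; exact List.mem_append.mpr (Or.inl hz)), ?_⟩
    intro h0
    rw [h0] at hz
    exact List.disjoint_of_nodup_append h2 hz (by simp)
  rw [hsupp] at hadj hup
  have hlne : l ≠ [] := by
    intro h0
    rw [h0] at hadj
    exact hnadj (List.chain'_cons.mp hadj).1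
  have hadjl : l.Chain' G.Adj := (hadj.tail).prefix ⟨[y], rfl⟩
  have hupl : l.Chain' (fun a b => r a < r b) := (hup.tail).prefix ⟨[y], rfl⟩
  have hDl : l.Chain' (DRel G col r x y) := by
    refine PCMHelp.chain'_imp_mem (PCMHelp.chain'_and hadjl hupl) ?_
    intro a b ha hb hab
    exact ⟨hab.1, hab.2, hnotbad a ha, hnotbad b hb, (hmem a ha).1, (hmem a ha).2,
      (hmem b hb).1, (hmem b hb).2⟩
  -- last of l
  have hlb' := List.getLast?_eq_getLast hlne
  set lb := l.getLast hlne with hlbdef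
  have hlbl : lb ∈ l := List.mem_of_getLast? hlb'
  have hxl : (x :: l).getLast? = some lb := by
    rw [show x :: l = [x] ++ l from rfl, PCMHelp.getLast?_append_right _ hlne]
    exact hlb'
  have hsplitadj := List.isChain_append.mp (show ((x :: l) ++ [y]).Chain' G.Adj from hadj)
  have hsplitup := List.isChain_append.mp
    (show ((x :: l) ++ [y]).Chain' (fun a b => r a < r b) from hup)
  have hadjlb : G.Adj lb y := hsplitadj.2.2 lb (by rw [hxl]; rfl) y rfl
  have huplb : r lb < r y := hsplitup.2.2 lb (by rw [hxl]; rfl) y rfl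
  -- head of l
  obtain ⟨hd, rest, rfl⟩ := List.exists_cons_of_ne_nil hlne
  simp only [List.cons_append] at hadj hup
  have hadjxhd : G.Adj x hd := (List.chain'_cons.mp hadj).1
  have hupxhd : r x < r hd := (List.chain'_cons.mp hup).1
  refine ⟨hd :: rest, hDl, ⟨hd, ?_, rfl⟩, ⟨lb, ?_, hlb'⟩, ?_⟩
  · exact ⟨hadjxhd, hupxhd, hnotbad hd (by simp), hadjxhd.ne',
      (hmem hd (by simp)).2⟩
  · exact ⟨hadjlb, huplb, hnotbad lb hlbl, (hmem lb hlbl).1, (hmem lb hlbl).2⟩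
  · intro z hz
    refine ⟨?_, (hmem z hz).1, (hmem z hz).2⟩
    rw [hsupp]
    exact List.mem_cons_of_mem _ (List.mem_append.mpr (Or.inl hz))

lemma compose_pc_path {G : SimpleGraph V} {col : V → V → Fin c} {r : V → ℕ}
    (hsym : ∀ u v, col u v = col v u)
    (h3 : Ordering3 G col r)
    (h4 : ∀ u v w, G.Adj u v → G.Adj u w → r v < r u → r w < r u → col u v = col u w)
    {x y : V}
    (l : List V) (hc : l.Chain' (DRel G col r x y))
    (hhead : ∃ a ∈ ASet G col r x y, l.head? = some a)
    (hlast : ∃ b ∈ BSet G col r x y, l.getLast? = some b) :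
    ∃ w : G.Walk x y, w.IsPath ∧ IsPCOpen G col w ∧ w.support = x :: l ++ [y] := by
  obtain ⟨a, haA, hha⟩ := hhead
  obtain ⟨b, hbB, hbb⟩ := hlast
  obtain ⟨haAdj, haR, haBad, haX, haY⟩ := haA
  obtain ⟨hbAdj, hbR, hbBad, hbX, hbY⟩ := hbB
  have hlne : l ≠ [] := by intro h0; rw [h0] at hha; simp at hha
  have hadjl : l.Chain' G.Adj := hc.imp fun a b h => h.1
  have hupl : l.Chain' (fun a b => r a < r b) := hc.imp fun a b h => h.2.1
  have hychain : (l ++ [y]).Chain' G.Adj := by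
    refine hadjl.append (by simp) ?_
    intro xx hxx yy hyy
    simp only [List.head?_cons, Option.mem_def, Option.some.injEq] at hyy
    subst hyy
    rw [hbb] at hxx
    simp only [Option.mem_def, Option.some.injEq] at hxx
    subst hxx
    exact hbAdj
  have hychainup : (l ++ [y]).Chain' (fun a b => r a < r b) := by
    refine hupl.append (by simp) ?_
    intro xx hxx yy hyy
    simp only [List.head?_cons, Option.mem_def, Option.some.injEq] at hyy
    subst hyy
    rw [hbb] at hxx
    simp only [Option.mem_def, Option.some.injEq] at hxx
    subst hxx
    exact hbR
  have hheadly : (l ++ [y]).head? = some a := by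
    rw [PCMHelp.head?_append_left _ hlne]
    exact hha
  have hfull : (x :: (l ++ [y])).Chain' G.Adj :=
    PCMHelp.chain'_cons_of_head? hheadly haAdj hychain
  have hupfull : (x :: (l ++ [y])).Chain' (fun a b => r a < r b) :=
    PCMHelp.chain'_cons_of_head? hheadly haR hychainup
  have hlastfull : (x :: (l ++ [y])).getLast? = some y := by
    rw [show x :: (l ++ [y]) = (x :: l) ++ [y] from rfl, List.getLast?_concat]
  obtain ⟨w, hw⟩ := exists_walk_of_chain (l ++ [y]) x y hfull hlastfull
  have hPl : ∀ z ∈ l, ¬ BadV G col r z := by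
    intro z hz
    exact PCMHelp.mem_chain'_prop (R := DRel G col r x y)
      (P := fun z => ¬ BadV G col r z) (fun a' b' h => ⟨h.2.2.1, h.2.2.2.1⟩)
      l a hha hc haBad z hz
  refine ⟨w, ?_, ?_, hw⟩
  · rw [Walk.isPath_def, hw]
    exact PCMHelp.nodup_of_chain'_lt hupfull
  · show (colorList G col w).Chain' (· ≠ ·)
    rw [colorList_eq col w, hw]
    refine pc_of_good hsym h3 h4 _ hfull hupfull ?_
    intro z hz
    have hzl : z ∈ l := by
      simp only [List.tail_cons, List.dropLast_concat] at hz
      exact hz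
    exact hPl z hzl


lemma key [Fintype V] [DecidableEq V]
    (G : SimpleGraph V) (col : V → V → Fin c) (hsym : ∀ u v, col u v = col v u)
    (r : V → ℕ) (hinj : Function.Injective r) (hord : Ordering4 G col r)
    (x y : V) (hxy : x ≠ y) (hrxy : r x < r y) (hnadj : ¬ G.Adj x y) (s : ℕ)
    (hcut : ∀ S : Finset V, x ∉ S → y ∉ S →
      (∀ p : G.Walk x y, p.IsPath → IsPCOpen G col p → ∃ v ∈ S, v ∈ p.support) →
      s ≤ S.card) :
    ∃ f : Fin s → G.Walk x y, (∀ i, (f i).IsPath ∧ IsPCOpen G col (f i)) ∧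
      (∀ i, ∃ z, z ∈ (f i).support ∧ z ≠ x ∧ z ≠ y) ∧
      (∀ i j, i ≠ j → ∀ v : V, v ∈ (f i).support → v ∈ (f j).support → v = x ∨ v = y) := by
  classical
  obtain ⟨h3, h4⟩ := hord
  set E0 : Finset (V × V) := Finset.univ.filter (fun q => DRel G col r x y q.1 q.2) with hE0
  have hrel : ∀ a b : V, PCMHelp.rel E0 a b ↔ DRel G col r x y a b := by
    intro a b
    rw [hE0]
    simp [PCMHelp.rel]
  have hSep : ∀ S : Finset V,
      PCMHelp.Sep (PCMHelp.rel E0) (ASet G col r x y) (BSet G col r x y) S → s ≤ S.card := by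
    intro S hS
    have h0 : s ≤ (S \ {x, y}).card := by
      refine hcut (S \ {x, y}) (by simp) (by simp) ?_
      intro p hpath hpc
      obtain ⟨l, hDl, hhead, hlast, hsub⟩ :=
        decompose_pc_path hsym hinj h3 h4 hxy hrxy hnadj p hpath hpc
      obtain ⟨w0, hw0S, hw0l⟩ := hS l
        ⟨hDl.imp (fun a b h => (hrel a b).mpr h), hhead, hlast⟩
      obtain ⟨hmem, hnex, hney⟩ := hsub w0 hw0l
      exact ⟨w0, by simp [Finset.mem_sdiff, hw0S, hnex, hney], hmem⟩
    exact le_trans h0 (Finset.card_le_card Finset.sdiff_subset)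
  obtain ⟨f0, hf0, hdisj0⟩ := PCMHelp.menger E0.card E0 le_rfl _ _ s hSep
  have hmk : ∀ i, ∃ w : G.Walk x y,
      w.IsPath ∧ IsPCOpen G col w ∧ w.support = x :: f0 i ++ [y] := by
    intro i
    obtain ⟨hc, hhead, hlast⟩ := hf0 i
    exact compose_pc_path hsym h3 h4 (f0 i)
      (hc.imp fun a b h => (hrel a b).mp h) hhead hlast
  choose w hw1 hw2 hw3 using hmk
  have hne0 : ∀ i, f0 i ≠ [] := by
    intro i h0
    obtain ⟨_, ⟨a, _, hha⟩, _⟩ := hf0 i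
    rw [h0] at hha
    simp at hha
  have hzxy : ∀ i z, z ∈ f0 i → z ≠ x ∧ z ≠ y := by
    intro i z hz
    obtain ⟨hc, ⟨a, haA, hha⟩, _⟩ := hf0 i
    refine PCMHelp.mem_chain'_prop (R := PCMHelp.rel E0)
      (P := fun z => z ≠ x ∧ z ≠ y) (fun a' b' h => ?_) (f0 i) a hha hc ?_ z hz
    · have h' := (hrel a' b').mp h
      exact ⟨⟨h'.2.2.2.2.1, h'.2.2.2.2.2.1⟩, ⟨h'.2.2.2.2.2.2.1, h'.2.2.2.2.2.2.2⟩⟩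
    · exact ⟨haA.2.2.2.1, haA.2.2.2.2⟩
  refine ⟨w, fun i => ⟨hw1 i, hw2 i⟩, ?_, ?_⟩
  · intro i
    obtain ⟨hd, rest, hfi⟩ := List.exists_cons_of_ne_nil (hne0 i)
    have hdmem : hd ∈ f0 i := by rw [hfi]; simp
    refine ⟨hd, ?_, (hzxy i hd hdmem).1, (hzxy i hd hdmem).2⟩
    rw [hw3 i]
    exact List.mem_cons_of_mem _ (List.mem_append.mpr (Or.inl hdmem))
  · intro i j hne v hvi hvj
    rw [hw3 i] at hvi
    rw [hw3 j] at hvj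
    rcases List.mem_cons.mp hvi with rfl | hvi'
    · exact Or.inl rfl
    rcases List.mem_append.mp hvi' with hvi'' | hvi''
    · rcases List.mem_cons.mp hvj with rfl | hvj'
      · exact Or.inl rfl
      rcases List.mem_append.mp hvj' with hvj'' | hvj''
      · exact (hdisj0 i j hne v hvi'' hvj'').elim
      · simp only [List.mem_singleton] at hvj''
        exact Or.inr hvj''
    · simp only [List.mem_singleton] at hvi''
      exact Or.inr hvi''

end PCMGraph


/-- Menger's theorem for PC paths on graphs PC acyclic of type 4.
The minimum size of a set `S ⊆ V(G) \ {x,y}` whose removal eliminates all PC paths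
between `x` and `y` equals the maximum number of pairwise internally vertex-disjoint
PC paths between `x` and `y`. -/
theorem pc_menger_type4 {V : Type*} [Fintype V] [DecidableEq V] {c : ℕ}
    (G : SimpleGraph V) (col : V → V → Fin c) (hsym : ∀ u v, col u v = col v u)
    (hacyc : PCAcyclic4 G col) (x y : V) (hxy : x ≠ y) (s t : ℕ)
    (hs : IsLeast {n : ℕ | ∃ S : Finset V, S.card = n ∧ x ∉ S ∧ y ∉ S ∧
        ∀ p : G.Walk x y, p.IsPath → IsPCOpen G col p → ∃ v ∈ S, v ∈ p.support} s)
    (ht : IsGreatest {k : ℕ | ∃ f : Fin k → G.Walk x y, Function.Injective f ∧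
        (∀ i, (f i).IsPath ∧ IsPCOpen G col (f i)) ∧
        ∀ i j, i ≠ j → ∀ v : V,
          v ∈ (f i).support → v ∈ (f j).support → v = x ∨ v = y} t) :
    s = t := by
  classical
  obtain ⟨r, hinj, hord⟩ := hacyc
  have hts : t ≤ s := by
    obtain ⟨S, hScard, hxS, hyS, hScut⟩ := hs.1
    obtain ⟨f, hfinj, hfp, hfd⟩ := ht.1
    have hch : ∀ i : Fin t, ∃ v, v ∈ S ∧ v ∈ (f i).support := by
      intro i
      obtain ⟨v, h1, h2⟩ := hScut (f i) (hfp i).1 (hfp i).2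
      exact ⟨v, h1, h2⟩
    choose g hg1 hg2 using hch
    have hginj : Function.Injective g := by
      intro i j hij
      by_contra hne
      rcases hfd i j hne (g i) (hg2 i) (by rw [hij]; exact hg2 j) with h | h
      · exact hxS (h ▸ hg1 i)
      · exact hyS (h ▸ hg1 i)
    have hcard : (Finset.univ : Finset (Fin t)).card ≤ S.card :=
      Finset.card_le_card_of_injOn g (fun i _ => hg1 i) (fun i _ j _ h => hginj h)
    rw [Finset.card_univ, Fintype.card_fin, hScard] at hcard
    exact hcard
  have hst : s ≤ t := by
    by_cases hadjxy : G.Adj x y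
    · exfalso
      obtain ⟨S, hScard, hxS, hyS, hScut⟩ := hs.1
      have hp : (Walk.cons hadjxy Walk.nil : G.Walk x y).IsPath := by
        rw [Walk.isPath_def]
        simp [hxy]
      have hpc : IsPCOpen G col (Walk.cons hadjxy Walk.nil) := by
        show (colorList G col _).Chain' _
        simp [colorList]
      obtain ⟨v, hvS, hvsup⟩ := hScut _ hp hpc
      have hv2 : v = x ∨ v = y := by simpa using hvsup
      rcases hv2 with rfl | rfl
      · exact hxS hvS
      · exact hyS hvS
    · have hcutgen : ∀ S : Finset V, x ∉ S → y ∉ S →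
          (∀ p : G.Walk x y, p.IsPath → IsPCOpen G col p → ∃ v ∈ S, v ∈ p.support) →
          s ≤ S.card := by
        intro S h1 h2 h3
        exact hs.2 ⟨S, rfl, h1, h2, h3⟩
      rcases lt_trichotomy (r x) (r y) with hr | hr | hr
      · obtain ⟨f, hfp, hwit, hfd⟩ :=
          PCMGraph.key G col hsym r hinj hord x y hxy hr hadjxy s hcutgen
        refine ht.2 ⟨f, ?_, hfp, hfd⟩
        intro i j hij
        by_contra hne
        obtain ⟨z, hz, hzx, hzy⟩ := hwit i
        rcases hfd i j hne z hz (by rw [← hij]; exact hz) with h | h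
        · exact hzx h
        · exact hzy h
      · exact absurd (hinj hr) hxy
      · have hcutgen' : ∀ S : Finset V, y ∉ S → x ∉ S →
            (∀ p : G.Walk y x, p.IsPath → IsPCOpen G col p → ∃ v ∈ S, v ∈ p.support) →
            s ≤ S.card := by
          intro S h1 h2 h3
          refine hcutgen S h2 h1 ?_
          intro p hpath hpc
          obtain ⟨v, hvS, hvmem⟩ := h3 p.reverse hpath.reverse
            (PCMGraph.isPCOpen_reverse hsym p hpc)
          exact ⟨v, hvS, by rwa [Walk.support_reverse, List.mem_reverse] at hvmem⟩
        obtain ⟨f, hfp, hwit, hfd⟩ := PCMGraph.key G col hsym r hinj hord y x hxy.symm hr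
          (fun h => hadjxy h.symm) s hcutgen'
        refine ht.2 ⟨fun i => (f i).reverse, ?_, ?_, ?_⟩
        · intro i j hij
          by_contra hne
          obtain ⟨z, hz, hzy, hzx⟩ := hwit i
          have hzj : z ∈ (f j).support := by
            have hb : (f i).reverse = (f j).reverse := hij
            have h0 : z ∈ (f j).reverse.support := by
              rw [← hb, Walk.support_reverse, List.mem_reverse]
              exact hz
            rwa [Walk.support_reverse, List.mem_reverse] at h0
          rcases hfd i j hne z hz hzj with h | h
          · exact hzy h
          · exact hzx h
        · intro i
          exact ⟨(hfp i).1.reverse, PCMGraph.isPCOpen_reverse hsym _ (hfp i).2⟩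
        · intro i j hij v hvi hvj
          rw [Walk.support_reverse, List.mem_reverse] at hvi hvj
          rcases hfd i j hij v hvi hvj with h | h
          · exact Or.inr h
          · exact Or.inl h
  exact le_antisymm hst hts
end

section
/- Let H be a graph and let G be the 2-edge-colored graph with V(G) = V(H) ∪ {x,y} (x, y new vertices), in which every edge of H is colored red and, for every u ∈ V(H), the edges xu and uy are present and colored blue. Then G is PC acyclic of type 3, and for every S ⊆ V(H), S is a vertex cover of H if and only if G − S has no PC path between x and y. -/
open SimpleGraph

variable {V : Type*} {c : ℕ}

/-- The 2-edge-colored graph built from a graph `H` for the vertex-cover reduction: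
vertices are `V(H) ⊕ {x, y}` (with `x = Sum.inr 0`, `y = Sum.inr 1`), the edges of `H`
are kept, and every vertex of `H` is joined to both `x` and `y`. -/
def VCGraph {W : Type*} (H : SimpleGraph W) : SimpleGraph (W ⊕ Fin 2) :=
  SimpleGraph.fromRel fun a b =>
    (∃ u v : W, a = Sum.inl u ∧ b = Sum.inl v ∧ H.Adj u v) ∨
    (∃ (u : W) (i : Fin 2), a = Sum.inl u ∧ b = Sum.inr i)

/-- Edges of `H` are red (color `0`); edges incident to `x` or `y` are blue (color `1`). -/
def col17 {W : Type*} : (W ⊕ Fin 2) → (W ⊕ Fin 2) → Fin 2 := fun a b =>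
  match a, b with
  | Sum.inl _, Sum.inl _ => 0
  | _, _ => 1


lemma vc_adj_inl_inl {W : Type*} {H : SimpleGraph W} {u v : W} :
    (VCGraph H).Adj (Sum.inl u) (Sum.inl v) ↔ H.Adj u v := by
  constructor
  · intro h
    rw [VCGraph, SimpleGraph.fromRel_adj] at h
    rcases h with ⟨_, h | h⟩ <;> rcases h with (⟨a, b, ha, hb, hab⟩ | ⟨a, i, ha, hb⟩)
    · cases ha; cases hb; exact hab
    · exact absurd hb (by simp)
    · cases ha; cases hb; exact hab.symm
    · exact absurd hb (by simp)
  · intro h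
    rw [VCGraph, SimpleGraph.fromRel_adj]
    exact ⟨by simp [h.ne], Or.inl (Or.inl ⟨u, v, rfl, rfl, h⟩)⟩

lemma vc_not_adj_inr_inr {W : Type*} {H : SimpleGraph W} {i j : Fin 2} :
    ¬ (VCGraph H).Adj (Sum.inr i) (Sum.inr j) := by
  intro h
  rw [VCGraph, SimpleGraph.fromRel_adj] at h
  rcases h with ⟨_, h | h⟩ <;> rcases h with (⟨a, b, ha, hb, hab⟩ | ⟨a, k, ha, hb⟩) <;>
    simp at ha

lemma vc_adj_inl_inr {W : Type*} {H : SimpleGraph W} (u : W) (i : Fin 2) :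
    (VCGraph H).Adj (Sum.inl u) (Sum.inr i) := by
  rw [VCGraph, SimpleGraph.fromRel_adj]
  exact ⟨by simp, Or.inl (Or.inr ⟨u, i, rfl, rfl⟩)⟩

/-- The graph `VCGraph H` is PC acyclic of type 3, and a set
`S ⊆ V(H)` is a vertex cover of `H` iff `VCGraph H − S` has no PC path between `x`
and `y`. -/
theorem vertex_cover_reduction {W : Type*} [Fintype W] (H : SimpleGraph W) :
    PCAcyclic3 (VCGraph H) col17 ∧
      ∀ S : Set W,
        ((∀ u v : W, H.Adj u v → u ∈ S ∨ v ∈ S) ↔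
          ¬ ∃ p : (VCGraph H).Walk (Sum.inr 0) (Sum.inr 1),
            p.IsPath ∧ IsPCOpen (VCGraph H) col17 p ∧
              ∀ u ∈ S, Sum.inl u ∉ p.support) := by
  constructor
  · -- PC acyclic of type 3
    refine ⟨Sum.elim (fun w => (Fintype.equivFin W w : ℕ) + 2) (fun i => (i : ℕ)), ?_, ?_⟩
    · intro a b hab
      cases a with
      | inl a => cases b with
        | inl b =>
          simp only [Sum.elim_inl, add_left_inj] at hab
          exact congrArg Sum.inl ((Fintype.equivFin W).injective (Fin.val_injective hab))
        | inr b =>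
          simp only [Sum.elim_inl, Sum.elim_inr] at hab
          exact absurd hab (by have := b.is_lt; omega)
      | inr a => cases b with
        | inl b =>
          simp only [Sum.elim_inl, Sum.elim_inr] at hab
          exact absurd hab (by have := a.is_lt; omega)
        | inr b =>
          simp only [Sum.elim_inr] at hab
          exact congrArg Sum.inr (Fin.val_injective hab)
    · intro u v w huv huw hrv hrw
      cases u with
      | inr i => cases v <;> cases w <;> rfl
      | inl a =>
        cases v with
        | inr j =>
          exfalso
          simp only [Sum.elim_inl, Sum.elim_inr] at hrv
          omega
        | inl b =>
          cases w with
          | inr j =>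
            exfalso
            simp only [Sum.elim_inl, Sum.elim_inr] at hrw
            omega
          | inl c => rfl
  · intro S
    constructor
    · -- vertex cover → no PC path avoiding S
      rintro hS ⟨p, hpath, hpc, havoid⟩
      cases p with
      | cons h1 q =>
        rename_i b
        cases b with
        | inr j => exact vc_not_adj_inr_inr h1
        | inl u1 =>
          cases q with
          | cons h2 q2 =>
            rename_i b2
            cases b2 with
            | inl u2 =>
              have hadj : H.Adj u1 u2 := vc_adj_inl_inl.mp h2
              have hu1 : Sum.inl u1 ∈ (SimpleGraph.Walk.cons h1 (SimpleGraph.Walk.cons h2 q2)).support := by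
                simp [SimpleGraph.Walk.support_cons]
              have hu2 : Sum.inl u2 ∈ (SimpleGraph.Walk.cons h1 (SimpleGraph.Walk.cons h2 q2)).support := by
                simp only [SimpleGraph.Walk.support_cons, List.mem_cons]
                exact Or.inr (Or.inr q2.start_mem_support)
              rcases hS u1 u2 hadj with hm | hm
              · exact havoid u1 hm hu1
              · exact havoid u2 hm hu2
            | inr j =>
              have : colorList (VCGraph H) col17 (SimpleGraph.Walk.cons h1 (SimpleGraph.Walk.cons h2 q2)) =
                  (1 : Fin 2) :: (1 : Fin 2) :: colorList (VCGraph H) col17 q2 := rfl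
              unfold IsPCOpen at hpc
              rw [this] at hpc
              exact (List.isChain_cons_cons.mp hpc).1 rfl
    · -- no PC path avoiding S → vertex cover
      intro hno u v hadj
      by_contra hne
      push_neg at hne
      obtain ⟨hu, hv⟩ := hne
      refine hno ⟨SimpleGraph.Walk.cons ((vc_adj_inl_inr u 0).symm)
        (SimpleGraph.Walk.cons (vc_adj_inl_inl.mpr hadj)
          (SimpleGraph.Walk.cons (vc_adj_inl_inr v 1) SimpleGraph.Walk.nil)), ?_, ?_, ?_⟩
      · rw [SimpleGraph.Walk.isPath_def]
        simp [SimpleGraph.Walk.support_cons, hadj.ne]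
      · show List.IsChain (· ≠ ·) [(1 : Fin 2), 0, 1]
        rw [List.isChain_cons_cons, List.isChain_cons_cons]
        exact ⟨by decide, by decide, List.isChain_singleton _⟩
      · intro w hw hmem
        simp only [SimpleGraph.Walk.support_cons, SimpleGraph.Walk.support_nil, List.mem_cons,
          List.mem_singleton] at hmem
        rcases hmem with h | h | h | h
        · exact absurd h (by simp)
        · cases Sum.inl.inj h; exact hu hw
        · cases Sum.inl.inj h; exact hv hw
        · exact absurd h (by simp)
end
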